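/- arXiv:1807.10369 — 3 statements merged into one kernel-verified Lean document; each statement's English description precedes it below -/
import Mathlib

section
/- Let N̂ be a homogeneous norm on the n-th Heisenberg group ℍⁿ, let d = d_N̂ be the induced left-invariant homogeneous distance, and let N(z) = N̂(z,0) be the associated norm on ℝ^{2n}. Then the metric space (ℍⁿ, d) has the geodesic linearity property (every infinite geodesic is a line) if and only if N is a strictly convex norm on ℝ^{2n}. -/
open MeasureTheory Set

noncomputable section

/-- `ℝ^{2n}`, with the Euclidean norm. -/
abbrev V (n : ℕ) := EuclideanSpace ℝ (Fin (2 * n))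

/-- The `n`-th Heisenberg group as a set: `ℝ^{2n} × ℝ`. -/
abbrev Heis (n : ℕ) := V n × ℝ

/-- Euclidean dot product on `ℝ^{2n}`. -/
def dot {n : ℕ} (p z : V n) : ℝ := ∑ i, p i * z i

/-- Index `i` as an element of the first half of `Fin (2n)`. -/
def fstIdx {n : ℕ} (i : Fin n) : Fin (2 * n) := ⟨i.1, by have := i.isLt; omega⟩

/-- Index `n + i` as an element of the second half of `Fin (2n)`. -/
def sndIdx {n : ℕ} (i : Fin n) : Fin (2 * n) := ⟨n + i.1, by have := i.isLt; omega⟩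

/-- The symplectic form `⟨z, J_n z'⟩ = ∑ (y_i x'_i - x_i y'_i)` on `ℝ^{2n}`. -/
def symp {n : ℕ} (z z' : V n) : ℝ :=
  ∑ i : Fin n, (z (sndIdx i) * z' (fstIdx i) - z (fstIdx i) * z' (sndIdx i))

/-- Heisenberg group multiplication. -/
def hmul {n : ℕ} (g g' : Heis n) : Heis n :=
  (g.1 + g'.1, g.2 + g'.2 + 2 * symp g.1 g'.1)

/-- Heisenberg group inverse. -/
def hinv {n : ℕ} (g : Heis n) : Heis n := (-g.1, -g.2)

/-- Heisenberg dilation `δ_λ(z,t) = (λ z, λ² t)`. -/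
def dil {n : ℕ} (l : ℝ) (g : Heis n) : Heis n := (l • g.1, l ^ 2 * g.2)

/-- `N : ℝ^{2n} → ℝ` is a norm. -/
structure IsNorm {n : ℕ} (N : V n → ℝ) : Prop where
  nonneg : ∀ z, 0 ≤ N z
  eq_zero_iff : ∀ z, N z = 0 ↔ z = 0
  smul : ∀ (a : ℝ) (z : V n), N (a • z) = |a| * N z
  triangle : ∀ z z', N (z + z') ≤ N z + N z'

/-- `N` is a strictly convex norm: additivity of the norm forces positive collinearity. -/
def StrictlyConvexNorm {n : ℕ} (N : V n → ℝ) : Prop :=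
  ∀ z z' : V n, z ≠ 0 → z' ≠ 0 → N (z + z') = N z + N z' →
    ∃ α : ℝ, 0 < α ∧ z' = α • z

/-- The subdifferential of `f : ℝ^{2n} → ℝ` at `z`. -/
def subdiff {n : ℕ} (f : V n → ℝ) (z : V n) : Set (V n) :=
  {p | ∀ z', f z + dot p (z' - z) ≤ f z'}

/-- A norm is smooth if its subdifferential is a singleton away from the origin. -/
def SmoothNorm {n : ℕ} (N : V n → ℝ) : Prop :=
  ∀ z : V n, z ≠ 0 → ∃ p : V n, subdiff N z = {p}

/-- The dual norm `N_*(p) = sup { p·z : N(z) = 1 }`. -/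
def dualN {n : ℕ} (N : V n → ℝ) (p : V n) : ℝ :=
  sSup ((fun z => dot p z) '' {z | N z = 1})

/-- `F_N(z) = ½ N(z)²`. -/
def FN {n : ℕ} (N : V n → ℝ) (z : V n) : ℝ := (1 / 2) * (N z) ^ 2

/-- The Legendre transform `f*(p) = sup_z (p·z - f(z))`. -/
def legendre {n : ℕ} (f : V n → ℝ) (p : V n) : ℝ :=
  ⨆ z : V n, (dot p z - f z)

/-- A horizontal (absolutely continuous) curve on `[a,b]`, encoded via an integrable
horizontal velocity `v = γ̇_I` together with the integral form of the horizontality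
condition for the last coordinate. -/
structure HorizCurve (n : ℕ) (a b : ℝ) where
  γ : ℝ → Heis n
  v : ℝ → V n
  intg : IntegrableOn v (Icc a b)
  pos : ∀ s ∈ Icc a b, (γ s).1 = (γ a).1 + ∫ u in a..s, v u
  vert : ∀ s ∈ Icc a b, (γ s).2 = (γ a).2 + ∫ u in a..s, 2 * symp ((γ u).1) (v u)

/-- The sub-Finsler distance associated to the norm `N` on `ℍⁿ`. -/
def dSF (n : ℕ) (N : V n → ℝ) (g g' : Heis n) : ℝ :=
  sInf { L | ∃ (a b : ℝ) (c : HorizCurve n a b), a ≤ b ∧ c.γ a = g ∧ c.γ b = g' ∧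
    L = ∫ s in a..b, N (c.v s) }

/-- Horizontal projection of the trajectory of the control `v`,
solving `γ̇_I = -v`, `γ_I(0) = 0`. -/
def trajI (n : ℕ) (v : ℝ → V n) (s : ℝ) : V n := -∫ u in (0:ℝ)..s, v u

/-- The trajectory of the control `v`: solves `ẋ_i = -v_i`, `ẏ_i = -v_{n+i}`,
`ṫ = -2∑(y_i v_i - x_i v_{n+i})`, starting at the neutral element. -/
def traj (n : ℕ) (v : ℝ → V n) (s : ℝ) : Heis n :=
  (trajI n v s, -∫ u in (0:ℝ)..s, 2 * symp (trajI n v u) (v u))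

/-- `v` is an admissible control steering `e` to `g` in time `T`. -/
def Admissible (n : ℕ) (T : ℝ) (g : Heis n) (v : ℝ → V n) : Prop :=
  IntegrableOn v (Icc 0 T) ∧ traj n v T = g

/-- `v` is optimal for the energy problem (P). -/
def OptimalEnergy (n : ℕ) (N : V n → ℝ) (T : ℝ) (g : Heis n) (v : ℝ → V n) : Prop :=
  Admissible n T g v ∧ ∀ w : ℝ → V n, Admissible n T g w →
    (∫ s in (0:ℝ)..T, FN N (v s)) ≤ ∫ s in (0:ℝ)..T, FN N (w s)

/-- `v` is optimal for the length problem. -/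
def OptimalLength (n : ℕ) (N : V n → ℝ) (T : ℝ) (g : Heis n) (v : ℝ → V n) : Prop :=
  Admissible n T g v ∧ ∀ w : ℝ → V n, Admissible n T g w →
    (∫ s in (0:ℝ)..T, N (v s)) ≤ ∫ s in (0:ℝ)..T, N (w s)

/-- The standard symplectic matrix `J_n` acting on `ℝ^{2n}`:
`(J z)_i = -z_{n+i}`, `(J z)_{n+i} = z_i`. -/
def Jmat (n : ℕ) (z : V n) : V n :=
  (EuclideanSpace.equiv (Fin (2 * n)) ℝ).symm
    (fun j => if h : (j : ℕ) < n then -z ⟨n + (j : ℕ), by have := j.isLt; omega⟩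
      else z ⟨(j : ℕ) - n, by have := j.isLt; omega⟩)

/-- The function `a` associated to a multiplier `λ` (with `λ_{2n+1} ≡ k`) and a control `v`:
`a_i = λ_i + 2k y_i`, `a_{n+i} = λ_{n+i} - 2k x_i`, where `(x,y) = γ_I` is the horizontal
projection of the trajectory of `v`. -/
def afun (n : ℕ) (v : ℝ → V n) (lam : ℝ → V n) (k : ℝ) (s : ℝ) : V n :=
  lam s - (2 * k) • Jmat n (trajI n v s)

/-- A Pontryagin multiplier `(λ₀, λ)` for the control `v` on `[0,T]` for problem (P):
`λ = (λ_I, k)` with `λ_{2n+1} ≡ k` constant, `λ̇_i = -2k v_{n+i}`, `λ̇_{n+i} = 2k v_i`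
(in integrated form), nontriviality, the pointwise minimum principle, and constancy
of the minimized Hamiltonian. -/
structure PMP (n : ℕ) (N : V n → ℝ) (T : ℝ) (v : ℝ → V n) (l0 : ℝ) where
  lam : ℝ → V n
  k : ℝ
  lam_eq : ∀ s ∈ Icc (0:ℝ) T,
    lam s = lam 0 + (2 * k) • ∫ u in (0:ℝ)..s, Jmat n (v u)
  nontriv : ¬(l0 = 0 ∧ k = 0 ∧ lam 0 = 0)
  argmin : ∀ s ∈ Icc (0:ℝ) T, ∀ u : V n,
    l0 * FN N (v s) - dot (afun n v lam k s) (v s) ≤ l0 * FN N u - dot (afun n v lam k s) u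
  isConst : ∃ c : ℝ, ∀ s ∈ Icc (0:ℝ) T,
    l0 * FN N (v s) - dot (afun n v lam k s) (v s) = c

/-- A homogeneous norm on the Heisenberg group `ℍⁿ`. -/
structure IsHomNorm {n : ℕ} (Nh : Heis n → ℝ) : Prop where
  nonneg : ∀ g, 0 ≤ Nh g
  eq_zero_iff : ∀ g, Nh g = 0 ↔ g = ((0 : V n), (0 : ℝ))
  symm : ∀ g, Nh (hinv g) = Nh g
  triangle : ∀ g g', Nh (hmul g g') ≤ Nh g + Nh g'
  homog : ∀ l : ℝ, 0 < l → ∀ g, Nh (dil l g) = l * Nh g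

/-- The geodesic linearity property: every infinite geodesic of `(ℍⁿ, d)` is an affine
line in `ℝ^{2n+1}`. -/
def GLP (n : ℕ) (d : Heis n → Heis n → ℝ) : Prop :=
  ∀ γ : ℝ → Heis n, (∀ s s' : ℝ, d (γ s) (γ s') = |s - s'|) →
    ∃ p u : Heis n, ∀ s : ℝ, γ s = p + s • u

/-- An infinite multiplier for the control `v` on `[0,∞)`. -/
def IsInfMult (n : ℕ) (N : V n → ℝ) (v : ℝ → V n) (lam : ℝ → V n) (k : ℝ) : Prop :=
  ∀ T : ℝ, 0 < T → ∃ m : PMP n N T v 1, m.lam = lam ∧ m.k = k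


lemma symp_self {n : ℕ} (z : V n) : symp z z = 0 := by
  apply Finset.sum_eq_zero; intro i _; ring

lemma symp_add_comm {n : ℕ} (z z' : V n) : symp z' z = - symp z z' := by
  unfold symp
  rw [← Finset.sum_neg_distrib]
  apply Finset.sum_congr rfl; intro i _; ring

lemma symp_smul_left {n : ℕ} (c : ℝ) (z z' : V n) : symp (c • z) z' = c * symp z z' := by
  unfold symp
  rw [Finset.mul_sum]
  apply Finset.sum_congr rfl; intro i _
  have h1 : (c • z) (sndIdx i) = c * z (sndIdx i) := rfl
  have h2 : (c • z) (fstIdx i) = c * z (fstIdx i) := rfl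
  rw [h1, h2]; ring

lemma symp_smul_right {n : ℕ} (c : ℝ) (z z' : V n) : symp z (c • z') = c * symp z z' := by
  unfold symp
  rw [Finset.mul_sum]
  apply Finset.sum_congr rfl; intro i _
  have h1 : (c • z') (sndIdx i) = c * z' (sndIdx i) := rfl
  have h2 : (c • z') (fstIdx i) = c * z' (fstIdx i) := rfl
  rw [h1, h2]; ring

lemma symp_zero_right {n : ℕ} (z : V n) : symp z 0 = 0 := by
  apply Finset.sum_eq_zero; intro i _
  have h1 : (0 : V n) (sndIdx i) = 0 := rfl
  have h2 : (0 : V n) (fstIdx i) = 0 := rfl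
  rw [h1, h2]; ring

namespace Stmt0Aux

variable {n : ℕ} {Nh : Heis n → ℝ}

lemma N_zero (hNh : IsHomNorm Nh) : Nh ((0 : V n), (0:ℝ)) = 0 :=
  (hNh.eq_zero_iff _).mpr rfl

lemma N_zero' (hNh : IsHomNorm Nh) : Nh (0 : Heis n) = 0 :=
  (hNh.eq_zero_iff _).mpr rfl

/-- homogeneity of the projected norm -/
lemma N_smul (hNh : IsHomNorm Nh) (c : ℝ) (w : V n) :
    Nh (c • w, (0:ℝ)) = |c| * Nh (w, (0:ℝ)) := by
  rcases lt_trichotomy c 0 with hc | hc | hc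
  · have h1 : Nh ((-c) • (-w) , (0:ℝ)) = (-c) * Nh (-w, (0:ℝ)) := by
      have := hNh.homog (-c) (by linarith) ((-w), (0:ℝ))
      simpa [dil] using this
    have h2 : (-c) • (-w) = c • w := by rw [neg_smul, smul_neg, neg_neg]
    have h3 : Nh (-w, (0:ℝ)) = Nh (w, (0:ℝ)) := by
      have := hNh.symm (w, (0:ℝ))
      simpa [hinv] using this
    rw [h2, h3] at h1
    rw [h1, abs_of_neg hc]
  · simp [hc]; exact N_zero' hNh
  · have := hNh.homog c hc (w, (0:ℝ))
    simp only [dil] at this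
    rw [abs_of_pos hc]
    simpa using this

lemma hmul_pair (z z' : V n) (t t' : ℝ) :
    hmul (z, t) (z', t') = (z + z', t + t' + 2 * symp z z') := rfl

/-- `Nh(k z, k t) ≤ k Nh(z,t)` -/
lemma pow_le (hNh : IsHomNorm Nh) (z : V n) (t : ℝ) :
    ∀ k : ℕ, Nh ((k : ℝ) • z, (k : ℝ) * t) ≤ (k : ℝ) * Nh (z, t) := by
  intro k
  induction k with
  | zero => simp; exact le_of_eq (N_zero' hNh)
  | succ k ih =>
    push_cast
    have key : hmul ((k : ℝ) • z, (k : ℝ) * t) (z, t)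
        = (((k:ℝ)+1) • z, (((k:ℝ)+1)) * t) := by
      rw [hmul_pair, symp_smul_left, symp_self, Prod.mk.injEq]
      refine ⟨by rw [add_smul, one_smul], by ring⟩
    calc Nh (((k:ℝ)+1) • z, (((k:ℝ)+1)) * t)
        = Nh (hmul ((k : ℝ) • z, (k : ℝ) * t) (z, t)) := by rw [key]
      _ ≤ Nh ((k : ℝ) • z, (k : ℝ) * t) + Nh (z, t) := hNh.triangle _ _
      _ ≤ (k : ℝ) * Nh (z, t) + Nh (z, t) := by linarith
      _ = (((k:ℝ)+1)) * Nh (z, t) := by ring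

/-- dividing the vertical part decreases the norm -/
lemma vert_div (hNh : IsHomNorm Nh) (z : V n) (t : ℝ) (m : ℕ) (hm : 0 < m) :
    Nh (z, t / m) ≤ Nh (z, t) := by
  have hm' : (0:ℝ) < m := by exact_mod_cast hm
  have hdil : dil (m : ℝ) (z, t / m) = ((m:ℝ) • z, (m:ℝ) * t) := by
    simp only [dil]
    rw [Prod.mk.injEq]
    refine ⟨rfl, by field_simp⟩
  have h1 : Nh ((m:ℝ) • z, (m:ℝ) * t) = (m:ℝ) * Nh (z, t / m) := by
    rw [← hdil]; exact hNh.homog _ hm' _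
  have h2 := pow_le hNh z t m
  rw [h1] at h2
  exact le_of_mul_le_mul_left (by linarith) hm'

lemma vert_small (hNh : IsHomNorm Nh) (t : ℝ) (m : ℕ) (hm : 0 < m) :
    Nh ((0 : V n), t / (m^2)) = (1 / m) * Nh ((0 : V n), t) := by
  have hm' : (0:ℝ) < m := by exact_mod_cast hm
  have hdil : dil (1 / (m:ℝ)) ((0 : V n), t) = ((0 : V n), t / (m^2)) := by
    simp only [dil]
    rw [Prod.mk.injEq]
    refine ⟨by simp, by field_simp⟩
  rw [← hdil]
  exact hNh.homog _ (by positivity) _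

lemma split_bound (hNh : IsHomNorm Nh) (z : V n) (s : ℝ) :
    Nh (z, (0:ℝ)) ≤ Nh (z, s) + Nh ((0 : V n), s) := by
  have key : hmul (z, s) ((0 : V n), -s) = (z, (0:ℝ)) := by
    rw [hmul_pair, symp_zero_right, Prod.mk.injEq]
    exact ⟨by simp, by ring⟩
  have hsym : Nh ((0 : V n), -s) = Nh ((0 : V n), s) := by
    have := hNh.symm ((0 : V n), s)
    simpa [hinv] using this
  calc Nh (z, (0:ℝ)) = Nh (hmul (z, s) ((0 : V n), -s)) := by rw [key]
    _ ≤ Nh (z, s) + Nh ((0 : V n), -s) := hNh.triangle _ _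
    _ = Nh (z, s) + Nh ((0 : V n), s) := by rw [hsym]

/-- Key lemma: the projected norm is dominated by the homogeneous norm. -/
lemma proj_le (hNh : IsHomNorm Nh) (z : V n) (t : ℝ) :
    Nh (z, (0:ℝ)) ≤ Nh (z, t) := by
  by_contra hlt
  push_neg at hlt
  set a := Nh (z, (0:ℝ)) with ha
  set b := Nh (z, t) with hb
  set c := Nh ((0 : V n), t) with hc
  have hc0 : 0 ≤ c := hNh.nonneg _
  obtain ⟨m, hm⟩ := exists_nat_gt (max 1 (c / (a - b)))
  have hm1 : (1:ℝ) < m := lt_of_le_of_lt (le_max_left _ _) hm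
  have hmpos : 0 < m := by exact_mod_cast (by linarith : (0:ℝ) < m)
  have hstep : a ≤ b + c / m := by
    have h1 : Nh (z, t / (m^2)) ≤ b := by
      have e : t / (m:ℝ)^2 = (t / m) / m := by ring
      rw [e]
      exact le_trans (vert_div hNh z (t/m) m hmpos) (vert_div hNh z t m hmpos)
    have h2 := split_bound hNh z (t / (m^2))
    rw [vert_small hNh t m hmpos] at h2
    have e2 : (1/(m:ℝ)) * c = c / m := by ring
    calc a ≤ Nh (z, t / (m^2)) + (1/m) * c := h2
      _ ≤ b + (1/(m:ℝ)) * c := by linarith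
      _ = b + c / m := by rw [e2]
  have hcm : c / m < a - b := by
    rw [div_lt_iff₀ (by linarith : (0:ℝ) < m)]
    have := lt_of_le_of_lt (le_max_right 1 (c / (a - b))) hm
    rw [div_lt_iff₀ (by linarith : (0:ℝ) < a - b)] at this
    linarith [this]
  linarith

/-- triangle inequality for the projected norm -/
lemma N_triangle (hNh : IsHomNorm Nh) (w w' : V n) :
    Nh (w + w', (0:ℝ)) ≤ Nh (w, (0:ℝ)) + Nh (w', (0:ℝ)) := by
  have key : hmul (w, (0:ℝ)) (w', (0:ℝ)) = (w + w', 2 * symp w w') := by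
    rw [hmul_pair, Prod.mk.injEq]; exact ⟨rfl, by ring⟩
  calc Nh (w + w', (0:ℝ)) ≤ Nh (w + w', 2 * symp w w') := proj_le hNh _ _
    _ = Nh (hmul (w, (0:ℝ)) (w', (0:ℝ))) := by rw [key]
    _ ≤ Nh (w, (0:ℝ)) + Nh (w', (0:ℝ)) := hNh.triangle _ _

lemma N_pos (hNh : IsHomNorm Nh) {z : V n} (hz : z ≠ 0) : 0 < Nh (z, (0:ℝ)) := by
  rcases lt_or_eq_of_le (hNh.nonneg (z, (0:ℝ))) with h | h
  · exact h
  · exfalso; apply hz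
    have := (hNh.eq_zero_iff (z, (0:ℝ))).mp h.symm
    exact congrArg Prod.fst this

end Stmt0Aux

namespace Stmt0Aux

variable {n : ℕ} {Nh : Heis n → ℝ}

/-- If some proper convex combination of unit vectors `u, u'` has norm 1, then all
nonnegative combinations have additive norm. -/
lemma flat_seg (hNh : IsHomNorm Nh) (u u' : V n)
    (hu : Nh (u, (0:ℝ)) = 1) (hu' : Nh (u', (0:ℝ)) = 1)
    (lam : ℝ) (hl0 : 0 < lam) (hl1 : lam < 1)
    (hflat : Nh (lam • u + (1 - lam) • u', (0:ℝ)) = 1)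
    (x y : ℝ) (hx : 0 ≤ x) (hy : 0 ≤ y) :
    Nh (x • u + y • u', (0:ℝ)) = x + y := by
  have upper : Nh (x • u + y • u', (0:ℝ)) ≤ x + y := by
    calc Nh (x • u + y • u', (0:ℝ)) ≤ Nh (x • u, (0:ℝ)) + Nh (y • u', (0:ℝ)) :=
          N_triangle hNh _ _
      _ = x + y := by rw [N_smul hNh, N_smul hNh, hu, hu', abs_of_nonneg hx,
          abs_of_nonneg hy]; ring
  rcases eq_or_lt_of_le (by linarith : (0:ℝ) ≤ x + y) with hs | hs
  · have hx0 : x = 0 := by linarith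
    have hy0 : y = 0 := by linarith
    simp [hx0, hy0]
    exact N_zero' hNh
  · have hs' : x + y ≠ 0 := ne_of_gt hs
    have hmu0 : 0 ≤ x / (x + y) := div_nonneg hx (le_of_lt hs)
    have hmu1 : x / (x + y) ≤ 1 := by rw [div_le_one hs]; linarith
    set μ := x / (x + y) with hmu
    set q : V n := μ • u + (1 - μ) • u' with hq
    have hqid : x • u + y • u' = (x + y) • q := by
      rw [hq, hmu]; match_scalars <;> field_simp <;> ring
    have hqle : Nh (q, (0:ℝ)) ≤ 1 := by
      calc Nh (q, (0:ℝ)) ≤ Nh (μ • u, (0:ℝ)) + Nh ((1-μ) • u', (0:ℝ)) := N_triangle hNh _ _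
        _ = μ + (1 - μ) := by rw [N_smul hNh, N_smul hNh, hu, hu',
            abs_of_nonneg hmu0, abs_of_nonneg (by linarith)]; ring
        _ = 1 := by ring
    have hqge : 1 ≤ Nh (q, (0:ℝ)) := by
      rcases le_or_gt μ lam with hcase | hcase
      · have hmulam : μ < 1 := lt_of_le_of_lt hcase hl1
        have h1μ : (1:ℝ) - μ ≠ 0 := by intro h; linarith [h]
        set θ := (lam - μ) / (1 - μ) with hθ
        have hθ0 : 0 ≤ θ := div_nonneg (by linarith) (by linarith)
        have hθ1 : θ < 1 := by rw [hθ, div_lt_one (by linarith)]; linarith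
        have hid : lam • u + (1 - lam) • u' = θ • u + (1 - θ) • q := by
          rw [hq, hθ]; match_scalars <;> field_simp <;> ring
        have hkey : (1:ℝ) ≤ θ + (1 - θ) * Nh (q, (0:ℝ)) := by
          calc (1:ℝ) = Nh (lam • u + (1 - lam) • u', (0:ℝ)) := hflat.symm
            _ = Nh (θ • u + (1 - θ) • q, (0:ℝ)) := by rw [hid]
            _ ≤ Nh (θ • u, (0:ℝ)) + Nh ((1 - θ) • q, (0:ℝ)) := N_triangle hNh _ _
            _ = θ + (1 - θ) * Nh (q, (0:ℝ)) := by
                rw [N_smul hNh, N_smul hNh, hu, abs_of_nonneg hθ0,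
                  abs_of_nonneg (by linarith : (0:ℝ) ≤ 1 - θ)]; ring
        nlinarith [hkey, hθ1]
      · have hmu0' : 0 < μ := lt_trans hl0 hcase
        have hμne : μ ≠ 0 := ne_of_gt hmu0'
        set θ := (μ - lam) / μ with hθ
        have hθ0 : 0 ≤ θ := div_nonneg (by linarith) (by linarith)
        have hθ1 : θ < 1 := by rw [hθ, div_lt_one hmu0']; linarith
        have hid : lam • u + (1 - lam) • u' = θ • u' + (1 - θ) • q := by
          rw [hq, hθ]; match_scalars <;> field_simp <;> ring
        have hkey : (1:ℝ) ≤ θ + (1 - θ) * Nh (q, (0:ℝ)) := by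
          calc (1:ℝ) = Nh (lam • u + (1 - lam) • u', (0:ℝ)) := hflat.symm
            _ = Nh (θ • u' + (1 - θ) • q, (0:ℝ)) := by rw [hid]
            _ ≤ Nh (θ • u', (0:ℝ)) + Nh ((1 - θ) • q, (0:ℝ)) := N_triangle hNh _ _
            _ = θ + (1 - θ) * Nh (q, (0:ℝ)) := by
                rw [N_smul hNh, N_smul hNh, hu', abs_of_nonneg hθ0,
                  abs_of_nonneg (by linarith : (0:ℝ) ≤ 1 - θ)]; ring
        nlinarith [hkey, hθ1]
    have hq1 : Nh (q, (0:ℝ)) = 1 := le_antisymm hqle hqge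
    rw [hqid, N_smul hNh, hq1, abs_of_pos hs]
    ring

end Stmt0Aux

namespace Stmt0Aux

variable {n : ℕ} {Nh : Heis n → ℝ}

lemma symp_neg_left (z z' : V n) : symp (-z) z' = - symp z z' := by
  have h := symp_smul_left (-1 : ℝ) z z'
  simpa using h

/-- the induced distance is symmetric -/
lemma d_symm (hNh : IsHomNorm Nh) (g g' : Heis n) :
    Nh (hmul (hinv g) g') = Nh (hmul (hinv g') g) := by
  have h : hmul (hinv g') g = hinv (hmul (hinv g) g') := by
    simp only [hmul, hinv, Prod.mk.injEq]
    constructor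
    · abel
    · rw [symp_neg_left, symp_neg_left, symp_add_comm]; ring
  rw [h, hNh.symm]

/-- distance along a line through the origin -/
lemma d_line (hNh : IsHomNorm Nh) (w : V n) (s s' : ℝ) :
    Nh (hmul (hinv ((s • w, (0:ℝ)) : Heis n)) ((s' • w, (0:ℝ)) : Heis n))
      = |s' - s| * Nh (w, (0:ℝ)) := by
  have key : hmul (hinv ((s • w, (0:ℝ)) : Heis n)) ((s' • w, (0:ℝ)) : Heis n)
      = ((s' - s) • w, (0:ℝ)) := by
    simp only [hmul, hinv, Prod.mk.injEq]
    constructor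
    · rw [sub_smul]; abel
    · rw [symp_neg_left, symp_smul_left, symp_smul_right, symp_self]; ring
  rw [key, N_smul hNh]

/-- distance across the corner of the broken line -/
lemma d_corner (hNh : IsHomNorm Nh) (u u' : V n)
    (hseg : ∀ x y : ℝ, 0 ≤ x → 0 ≤ y → Nh (x • u + y • u', (0:ℝ)) = x + y)
    (x y : ℝ) (hx : 0 ≤ x) (hy : 0 ≤ y) (t : ℝ) (ht : t = 2 * (y * (x * symp u' u))) :
    Nh (x • u + y • u', t) = x + y := by
  have upper : Nh (x • u + y • u', t) ≤ x + y := by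
    have key : hmul ((y • u', (0:ℝ)) : Heis n) ((x • u, (0:ℝ)) : Heis n)
        = (x • u + y • u', t) := by
      simp only [hmul, Prod.mk.injEq]
      constructor
      · abel
      · rw [symp_smul_left, symp_smul_right, ht]; ring
    have h1 := hNh.triangle ((y • u', (0:ℝ)) : Heis n) ((x • u, (0:ℝ)) : Heis n)
    rw [key] at h1
    have h2 : Nh ((y • u' : V n), (0:ℝ)) = y := by
      have := hseg 0 y le_rfl hy
      simpa using this
    have h3 : Nh ((x • u : V n), (0:ℝ)) = x := by
      have := hseg x 0 hx le_rfl
      simpa using this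
    rw [h2, h3] at h1
    linarith
  have lower : x + y ≤ Nh (x • u + y • u', t) := by
    rw [← hseg x y hx hy]
    exact proj_le hNh _ _
  linarith

/-- The forward direction: GLP implies strict convexity. -/
lemma glp_to_sc (hNh : IsHomNorm Nh)
    (hGLP : GLP n (fun g g' => Nh (hmul (hinv g) g'))) :
    StrictlyConvexNorm (fun z : V n => Nh (z, (0 : ℝ))) := by
  intro z z' hz hz' hadd
  simp only at hadd
  set a := Nh (z, (0:ℝ)) with hadef
  set b := Nh (z', (0:ℝ)) with hbdef
  have ha : 0 < a := N_pos hNh hz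
  have hb : 0 < b := N_pos hNh hz'
  set u : V n := a⁻¹ • z with hudef
  set u' : V n := b⁻¹ • z' with hu'def
  have hu : Nh (u, (0:ℝ)) = 1 := by
    rw [hudef, N_smul hNh, abs_of_pos (by positivity), ← hadef, inv_mul_cancel₀ (ne_of_gt ha)]
  have hu' : Nh (u', (0:ℝ)) = 1 := by
    rw [hu'def, N_smul hNh, abs_of_pos (by positivity), ← hbdef, inv_mul_cancel₀ (ne_of_gt hb)]
  have hab : (0:ℝ) < a + b := by linarith
  set lam := a / (a + b) with hlamdef
  have hl0 : 0 < lam := by positivity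
  have hl1 : lam < 1 := by rw [hlamdef, div_lt_one hab]; linarith
  have hflat : Nh (lam • u + (1 - lam) • u', (0:ℝ)) = 1 := by
    have hid : lam • u + (1 - lam) • u' = (a + b)⁻¹ • (z + z') := by
      rw [hudef, hu'def, hlamdef]
      match_scalars <;> (field_simp; try ring)
    rw [hid, N_smul hNh, hadd, abs_of_pos (by positivity),
      inv_mul_cancel₀ (ne_of_gt hab)]
  have hseg := flat_seg hNh u u' hu hu' lam hl0 hl1 hflat
  -- the broken line
  set γ : ℝ → Heis n := fun s => if 0 ≤ s then ((s • u, (0:ℝ)) : Heis n)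
    else ((s • u', (0:ℝ)) : Heis n) with hγdef
  have hgeo : ∀ s s' : ℝ,
      (fun g g' => Nh (hmul (hinv g) g')) (γ s) (γ s') = |s - s'| := by
    -- first the case s ≤ 0 ≤ s' (plus same-sign cases), then symmetrize
    have main : ∀ s s' : ℝ, s ≤ s' →
        Nh (hmul (hinv (γ s)) (γ s')) = |s - s'| := by
      intro s s' hss
      rcases le_or_gt 0 s with h0s | h0s
      · -- both nonneg
        have h0s' : 0 ≤ s' := le_trans h0s hss
        rw [hγdef]
        simp only [if_pos h0s, if_pos h0s']
        rw [d_line hNh u s s', hu, mul_one, abs_sub_comm]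
      · rcases le_or_gt 0 s' with h0s' | h0s'
        · -- s < 0 ≤ s'
          rw [hγdef]
          simp only [if_neg (not_le.mpr h0s), if_pos h0s']
          have key : hmul (hinv ((s • u', (0:ℝ)) : Heis n)) ((s' • u, (0:ℝ)) : Heis n)
              = (s' • u + (-s) • u', 2 * ((-s) * (s' * symp u' u))) := by
            simp only [hmul, hinv, Prod.mk.injEq]
            constructor
            · rw [neg_smul]; abel
            · rw [symp_neg_left, symp_smul_left, symp_smul_right, symp_add_comm u u']
              ring
          rw [key, d_corner hNh u u' hseg s' (-s) h0s' (by linarith) _ rfl]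
          rw [abs_of_nonpos (by linarith)]
          ring
        · -- both negative
          rw [hγdef]
          simp only [if_neg (not_le.mpr h0s), if_neg (not_le.mpr h0s')]
          rw [d_line hNh u' s s', hu', mul_one, abs_sub_comm]
    intro s s'
    simp only
    rcases le_total s s' with h | h
    · exact main s s' h
    · rw [d_symm hNh, main s' s h, abs_sub_comm]
  obtain ⟨p, w, hpw⟩ := hGLP γ hgeo
  have hγ0 : γ 0 = ((0 : V n), (0:ℝ)) := by
    rw [hγdef]; simp
  have hp : p = ((0 : V n), (0:ℝ)) := by
    have := hpw 0
    rw [hγ0] at this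
    simpa using this.symm
  have hw : w = ((u : V n), (0:ℝ)) := by
    have := hpw 1
    rw [hγdef] at this
    simp only [if_pos (by norm_num : (0:ℝ) ≤ 1), one_smul, hp] at this
    simpa [Prod.ext_iff] using this.symm
  have hneg : ((-1 : ℝ) • u', (0:ℝ)) = -w := by
    have := hpw (-1)
    rw [hγdef] at this
    simp only [if_neg (by norm_num : ¬ (0:ℝ) ≤ -1), hp] at this
    rw [this]
    simp
  have huu' : u' = u := by
    rw [hw] at hneg
    have h1 : (-1 : ℝ) • u' = -u := congrArg Prod.fst hneg
    have : u' = -((-1 : ℝ) • u') := by rw [neg_smul, one_smul, neg_neg]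
    rw [this, h1, neg_neg]
  refine ⟨b * a⁻¹, by positivity, ?_⟩
  have hz'e : z' = b • u' := by
    rw [hu'def, smul_smul, mul_inv_cancel₀ (ne_of_gt hb), one_smul]
  rw [hz'e, huu', hudef, smul_smul]

end Stmt0Aux

namespace Stmt0Aux

variable {n : ℕ} {Nh : Heis n → ℝ}

lemma symp_add_left (z w z' : V n) : symp (z + w) z' = symp z z' + symp w z' := by
  unfold symp
  rw [← Finset.sum_add_distrib]
  apply Finset.sum_congr rfl; intro i _
  have h1 : (z + w) (sndIdx i) = z (sndIdx i) + w (sndIdx i) := rfl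
  have h2 : (z + w) (fstIdx i) = z (fstIdx i) + w (fstIdx i) := rfl
  rw [h1, h2]; ring

lemma symp_add_right (z z' w : V n) : symp z (z' + w) = symp z z' + symp z w := by
  unfold symp
  rw [← Finset.sum_add_distrib]
  apply Finset.sum_congr rfl; intro i _
  have h1 : (z' + w) (sndIdx i) = z' (sndIdx i) + w (sndIdx i) := rfl
  have h2 : (z' + w) (fstIdx i) = z' (fstIdx i) + w (fstIdx i) := rfl
  rw [h1, h2]; ring

lemma symp_neg_right (z z' : V n) : symp z (-z') = - symp z z' := by
  have h := symp_smul_right (-1 : ℝ) z z'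
  simpa using h

/-- general form of the displacement between two group elements -/
lemma hmul_hinv (g g' : Heis n) :
    hmul (hinv g) g' = (g'.1 - g.1, g'.2 - g.2 - 2 * symp g.1 g'.1) := by
  simp only [hmul, hinv, Prod.mk.injEq]
  constructor
  · abel
  · rw [symp_neg_left]; ring

/-- cocycle property of displacements -/
lemma E_cocycle (g g' g'' : Heis n) :
    hmul (hmul (hinv g) g') (hmul (hinv g') g'') = hmul (hinv g) g'' := by
  simp only [hmul, hinv, symp_add_left, symp_add_right, symp_neg_left,
    symp_neg_right, symp_self, Prod.mk.injEq]
  refine ⟨by abel, by ring⟩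

/-- changing only the vertical part of a middle factor shifts the product's
vertical part by the same amount -/
lemma vert_shift_in_product (A C : Heis n) (z : V n) (t t' : ℝ) :
    hmul (hmul A (z, t)) C
      = ((hmul (hmul A (z, t')) C).1, (hmul (hmul A (z, t')) C).2 + (t - t')) := by
  simp only [hmul]
  rw [Prod.mk.injEq]
  exact ⟨rfl, by ring⟩

/-- The vertical shift lemma: shifting the vertical coordinate costs linearly,
at rate controlled by how much symplectic product with the horizontal part
one can gain with a cheap detour. -/
lemma shift_cost (hNh : IsHomNorm Nh) (w e : V n) (t r : ℝ) :
    Nh (w, t + 4 * (r * symp e w)) ≤ Nh (w, t) + 2 * |r| * Nh (e, (0:ℝ)) := by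
  have key : hmul (hmul ((r • e, (0:ℝ)) : Heis n) ((w, t) : Heis n))
      ((-(r • e), (0:ℝ)) : Heis n) = (w, t + 4 * (r * symp e w)) := by
    simp only [hmul, symp_add_left, symp_add_right, symp_neg_left, symp_neg_right,
      symp_smul_left, symp_smul_right, symp_self, Prod.mk.injEq]
    refine ⟨by abel, ?_⟩
    rw [symp_add_comm e w]
    ring
  calc Nh (w, t + 4 * (r * symp e w))
      = Nh (hmul (hmul ((r • e, (0:ℝ)) : Heis n) ((w, t) : Heis n))
          ((-(r • e), (0:ℝ)) : Heis n)) := by rw [key]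
    _ ≤ Nh (hmul ((r • e, (0:ℝ)) : Heis n) ((w, t) : Heis n))
          + Nh ((-(r • e), (0:ℝ)) : Heis n) := hNh.triangle _ _
    _ ≤ Nh ((r • e, (0:ℝ)) : Heis n) + Nh ((w, t) : Heis n)
          + Nh ((-(r • e), (0:ℝ)) : Heis n) := by
        linarith [hNh.triangle ((r • e, (0:ℝ)) : Heis n) ((w, t) : Heis n)]
    _ = Nh (w, t) + 2 * |r| * Nh (e, (0:ℝ)) := by
        have h1 : Nh ((r • e : V n), (0:ℝ)) = |r| * Nh (e, (0:ℝ)) := N_smul hNh r e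
        have h2 : Nh ((-(r • e) : V n), (0:ℝ)) = |r| * Nh (e, (0:ℝ)) := by
          rw [← neg_smul, N_smul hNh, abs_neg]
        rw [h1, h2]; ring

end Stmt0Aux

namespace Stmt0Aux

variable {n : ℕ} {Nh : Heis n → ℝ}

/-- splitting a sum over `Fin (2n)` into the two halves -/
lemma sum_split (f : Fin (2 * n) → ℝ) :
    ∑ j, f j = ∑ i : Fin n, f (fstIdx i) + ∑ i : Fin n, f (sndIdx i) := by
  have hbij : Function.Bijective (Sum.elim (fstIdx (n := n)) (sndIdx (n := n))) := by
    rw [Fintype.bijective_iff_injective_and_card]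
    constructor
    · intro x y hxy
      rcases x with x | x <;> rcases y with y | y <;>
        simp only [Sum.elim_inl, Sum.elim_inr] at hxy <;>
        have := congrArg Fin.val hxy <;>
        simp only [fstIdx, sndIdx] at this
      · exact congrArg Sum.inl (Fin.ext this)
      · exact absurd this (by omega)
      · exact absurd this (by omega)
      · exact congrArg Sum.inr (Fin.ext (by omega))
    · simp [Fintype.card_sum]; omega
  have := Fintype.sum_bijective _ hbij (fun x => f (Sum.elim fstIdx sndIdx x)) f
    (fun x => rfl)
  rw [← this, Fintype.sum_sum_type]
  simp

lemma Jmat_apply (z : V n) (j : Fin (2*n)) :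
    (Jmat n z) j = if h : (j : ℕ) < n then -z ⟨n + (j : ℕ), by have := j.isLt; omega⟩
      else z ⟨(j : ℕ) - n, by have := j.isLt; omega⟩ := rfl

lemma Jmat_fst (z : V n) (i : Fin n) : (Jmat n z) (fstIdx i) = -z (sndIdx i) := by
  rw [Jmat_apply, dif_pos (show ((fstIdx i : Fin (2*n)) : ℕ) < n from i.isLt)]
  rfl

lemma Jmat_snd (z : V n) (i : Fin n) : (Jmat n z) (sndIdx i) = z (fstIdx i) := by
  have hnlt : ¬ ((sndIdx i : Fin (2*n)) : ℕ) < n := by simp [sndIdx]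
  rw [Jmat_apply, dif_neg hnlt]
  exact congrArg (fun j => z j) (Fin.ext (by show n + i.1 - n = i.1; omega))

/-- `symp (J z) z'` is the euclidean inner product -/
lemma symp_J (z z' : V n) : symp (Jmat n z) z' = ∑ j, z j * z' j := by
  rw [sum_split (fun j => z j * z' j)]
  unfold symp
  rw [← Finset.sum_add_distrib]
  apply Finset.sum_congr rfl; intro i _
  rw [Jmat_fst, Jmat_snd]; ring

lemma Jmat_sq (z : V n) : Jmat n (Jmat n z) = -z := by
  ext j
  rcases lt_or_ge ((j : Fin (2*n)) : ℕ) n with hj | hj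
  · have e1 : j = fstIdx ⟨(j:ℕ), hj⟩ := Fin.ext rfl
    rw [e1, Jmat_fst, Jmat_snd]
    rfl
  · have hj2 : (j:ℕ) - n < n := by have := j.isLt; omega
    have e1 : j = sndIdx ⟨(j:ℕ) - n, hj2⟩ := Fin.ext (by simp [sndIdx]; omega)
    rw [e1, Jmat_snd, Jmat_fst]
    rfl

lemma Jmat_neg (z : V n) : Jmat n (-z) = - Jmat n z := by
  ext j
  rw [show (-Jmat n z) j = -(Jmat n z j) from rfl, Jmat_apply, Jmat_apply]
  rcases lt_or_ge ((j : Fin (2*n)) : ℕ) n with hj | hj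
  · rw [dif_pos hj, dif_pos hj]; rfl
  · rw [dif_neg (not_lt.mpr hj), dif_neg (not_lt.mpr hj)]; rfl

end Stmt0Aux

namespace Stmt0Aux

variable {n : ℕ} {Nh : Heis n → ℝ}

/-- sum of squares of coordinates -/
def S2 (z : V n) : ℝ := ∑ j, (z j)^2

lemma S2_nonneg (z : V n) : 0 ≤ S2 z :=
  Finset.sum_nonneg (fun j _ => sq_nonneg _)

lemma norm_eq_sqrt_S2 (z : V n) : ‖z‖ = Real.sqrt (S2 z) := by
  rw [EuclideanSpace.norm_eq]
  congr 1
  apply Finset.sum_congr rfl; intro j _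
  rw [Real.norm_eq_abs, sq_abs]

lemma S2_J (z : V n) : S2 (Jmat n z) = S2 z := by
  unfold S2
  rw [sum_split (fun j => ((Jmat n z) j)^2), sum_split (fun j => (z j)^2)]
  rw [add_comm (∑ i : Fin n, (z (fstIdx i))^2) _]
  congr 1
  · apply Finset.sum_congr rfl; intro i _; rw [Jmat_fst]; ring
  · apply Finset.sum_congr rfl; intro i _; rw [Jmat_snd]

lemma S2_neg (z : V n) : S2 (-z) = S2 z := by
  unfold S2
  apply Finset.sum_congr rfl; intro j _
  have : (-z) j = -(z j) := rfl
  rw [this]; ring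

lemma symp_eq_inner (z z' : V n) : symp z z' = ∑ j, (-(Jmat n z)) j * z' j := by
  have h1 : Jmat n (-(Jmat n z)) = z := by rw [Jmat_neg, Jmat_sq, neg_neg]
  calc symp z z' = symp (Jmat n (-(Jmat n z))) z' := by rw [h1]
    _ = ∑ j, (-(Jmat n z)) j * z' j := symp_J _ _

lemma abs_symp_le (z z' : V n) :
    |symp z z'| ≤ Real.sqrt (S2 z) * Real.sqrt (S2 z') := by
  rw [symp_eq_inner]
  have hcs := Finset.sum_mul_sq_le_sq_mul_sq Finset.univ
    (fun j => (-(Jmat n z)) j) (fun j => z' j)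
  have hS : ∑ j, ((-(Jmat n z)) j)^2 = S2 z := by
    have : ∑ j, ((-(Jmat n z)) j)^2 = S2 (-(Jmat n z)) := rfl
    rw [this, S2_neg, S2_J]
  have habs : |∑ j, (-(Jmat n z)) j * z' j|
      = Real.sqrt ((∑ j, (-(Jmat n z)) j * z' j)^2) := by
    rw [Real.sqrt_sq_eq_abs]
  rw [habs]
  calc Real.sqrt ((∑ j, (-(Jmat n z)) j * z' j)^2)
      ≤ Real.sqrt ((∑ j, ((-(Jmat n z)) j)^2) * ∑ j, (z' j)^2) :=
        Real.sqrt_le_sqrt hcs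
    _ = Real.sqrt (S2 z) * Real.sqrt (S2 z') := by
        rw [hS, Real.sqrt_mul (S2_nonneg z)]; rfl

lemma symp_J_self (z : V n) : symp (Jmat n z) z = S2 z := by
  rw [symp_J]; unfold S2; apply Finset.sum_congr rfl; intros; ring

lemma S2_pos {z : V n} (hz : z ≠ 0) : 0 < S2 z := by
  rcases (S2_nonneg z).lt_or_eq with h | h
  · exact h
  · exfalso; apply hz
    have hall := (Finset.sum_eq_zero_iff_of_nonneg
      (fun j (_ : j ∈ Finset.univ) => sq_nonneg (z j))).mp h.symm
    ext j
    have := hall j (Finset.mem_univ j)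
    have : z j = 0 := by nlinarith [this]
    simpa using this

lemma abs_coord_le (z : V n) (j : Fin (2*n)) : |z j| ≤ Real.sqrt (S2 z) := by
  have h1 : (z j)^2 ≤ S2 z :=
    Finset.single_le_sum (fun i (_ : i ∈ Finset.univ) => sq_nonneg (z i))
      (Finset.mem_univ j)
  calc |z j| = Real.sqrt ((z j)^2) := (Real.sqrt_sq_eq_abs _).symm
    _ ≤ Real.sqrt (S2 z) := Real.sqrt_le_sqrt h1

lemma z_decomp (z : V n) :
    z = ∑ j, (z j) • EuclideanSpace.single j (1:ℝ) := by
  ext k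
  rw [show (∑ j, (z j) • EuclideanSpace.single j (1:ℝ)) k
    = ∑ j, ((z j) • EuclideanSpace.single j (1:ℝ)) k from
      by rw [WithLp.ofLp_sum]; exact Finset.sum_apply k Finset.univ _]
  have : ∀ j, ((z j) • EuclideanSpace.single j (1:ℝ)) k
      = (z j) * (if k = j then (1:ℝ) else 0) := by
    intro j
    have h1 : ((z j) • EuclideanSpace.single j (1:ℝ)) k
        = (z j) * (EuclideanSpace.single j (1:ℝ)) k := rfl
    rw [h1, EuclideanSpace.single_apply]
  simp only [this, mul_ite, mul_one, mul_zero]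
  rw [Finset.sum_ite_eq (Finset.univ) k (fun j => z j)]
  simp

lemma N_sum_le (hNh : IsHomNorm Nh) {α : Type*} (s : Finset α) (f : α → V n) :
    Nh (∑ i ∈ s, f i, (0:ℝ)) ≤ ∑ i ∈ s, Nh (f i, (0:ℝ)) := by
  classical
  induction s using Finset.cons_induction with
  | empty => simp; exact le_of_eq (N_zero' hNh)
  | cons a s ha ih =>
    rw [Finset.sum_cons, Finset.sum_cons]
    calc Nh (f a + ∑ i ∈ s, f i, (0:ℝ))
        ≤ Nh (f a, (0:ℝ)) + Nh (∑ i ∈ s, f i, (0:ℝ)) := N_triangle hNh _ _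
      _ ≤ Nh (f a, (0:ℝ)) + ∑ i ∈ s, Nh (f i, (0:ℝ)) := by linarith

/-- the constant `C₁` comparing `N` with the euclidean norm from above -/
def C1 (n : ℕ) (Nh : Heis n → ℝ) : ℝ :=
  ∑ j : Fin (2*n), Nh (EuclideanSpace.single j (1:ℝ), (0:ℝ))

lemma C1_nonneg (hNh : IsHomNorm Nh) : 0 ≤ C1 n Nh :=
  Finset.sum_nonneg (fun j _ => hNh.nonneg _)

lemma N_le_C1 (hNh : IsHomNorm Nh) (z : V n) :
    Nh (z, (0:ℝ)) ≤ C1 n Nh * Real.sqrt (S2 z) := by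
  calc Nh (z, (0:ℝ))
      = Nh (∑ j, (z j) • EuclideanSpace.single j (1:ℝ), (0:ℝ)) := by rw [← z_decomp]
    _ ≤ ∑ j, Nh ((z j) • EuclideanSpace.single j (1:ℝ), (0:ℝ)) :=
        N_sum_le hNh _ _
    _ = ∑ j, |z j| * Nh (EuclideanSpace.single j (1:ℝ), (0:ℝ)) := by
        apply Finset.sum_congr rfl; intro j _; exact N_smul hNh _ _
    _ ≤ ∑ j, Real.sqrt (S2 z) * Nh (EuclideanSpace.single j (1:ℝ), (0:ℝ)) := by
        apply Finset.sum_le_sum; intro j _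
        exact mul_le_mul_of_nonneg_right (abs_coord_le z j) (hNh.nonneg _)
    _ = C1 n Nh * Real.sqrt (S2 z) := by rw [← Finset.mul_sum, C1, mul_comm]

/-- reverse comparison, by compactness -/
lemma exists_m0 (hNh : IsHomNorm Nh) :
    ∃ m₀ : ℝ, 0 < m₀ ∧ ∀ z : V n, m₀ * ‖z‖ ≤ Nh (z, (0:ℝ)) := by
  rcases Nat.eq_zero_or_pos n with rfl | hn
  · refine ⟨1, one_pos, fun z => ?_⟩
    have hz : ‖z‖ = 0 := by
      rw [norm_eq_sqrt_S2]
      have : S2 z = 0 :=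
        Finset.sum_eq_zero (fun j _ => absurd j.isLt (by omega))
      rw [this, Real.sqrt_zero]
    rw [hz, mul_zero]
    exact hNh.nonneg _
  · -- continuity of N
    have hNle : ∀ x y : V n, Nh (x, (0:ℝ)) - Nh (y, (0:ℝ)) ≤ Nh (x - y, (0:ℝ)) := by
      intro x y
      have := N_triangle hNh (x - y) y
      rw [sub_add_cancel] at this
      linarith
    have hNneg : ∀ w : V n, Nh (-w, (0:ℝ)) = Nh (w, (0:ℝ)) := by
      intro w
      have := hNh.symm ((w : V n), (0:ℝ))
      simpa [hinv] using this
    have hlip : LipschitzWith (Real.toNNReal (C1 n Nh)) (fun z : V n => Nh (z, (0:ℝ))) := by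
      apply LipschitzWith.of_dist_le_mul
      intro x y
      rw [Real.dist_eq, Real.coe_toNNReal _ (C1_nonneg hNh)]
      rw [abs_le]
      constructor
      · have h1 := hNle y x
        have h2 : Nh (y - x, (0:ℝ)) ≤ C1 n Nh * ‖y - x‖ := by
          rw [norm_eq_sqrt_S2]; exact N_le_C1 hNh _
        have h3 : ‖y - x‖ = dist x y := by rw [dist_comm, dist_eq_norm]
        rw [h3] at h2
        linarith
      · have h1 := hNle x y
        have h2 : Nh (x - y, (0:ℝ)) ≤ C1 n Nh * ‖x - y‖ := by
          rw [norm_eq_sqrt_S2]; exact N_le_C1 hNh _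
        rw [← dist_eq_norm] at h2
        linarith
    have hcont : Continuous (fun z : V n => Nh (z, (0:ℝ))) := hlip.continuous
    -- nonempty compact sphere
    have h2n : 0 < 2 * n := by omega
    set e₀ : V n := EuclideanSpace.single (⟨0, h2n⟩ : Fin (2*n)) (1:ℝ) with he₀
    have he₀mem : e₀ ∈ Metric.sphere (0 : V n) 1 := by
      rw [mem_sphere_zero_iff_norm, he₀, EuclideanSpace.norm_single]
      norm_num
    obtain ⟨z₀, hz₀mem, hmin⟩ := (isCompact_sphere (0 : V n) 1).exists_isMinOn
      ⟨e₀, he₀mem⟩ hcont.continuousOn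
    have hz₀norm : ‖z₀‖ = 1 := mem_sphere_zero_iff_norm.mp hz₀mem
    have hz₀ne : z₀ ≠ 0 := by
      intro h; rw [h, norm_zero] at hz₀norm; norm_num at hz₀norm
    refine ⟨Nh (z₀, (0:ℝ)), N_pos hNh hz₀ne, fun z => ?_⟩
    rcases eq_or_ne z 0 with rfl | hz
    · simp
      exact le_of_eq (N_zero' hNh).symm
    · have hznorm : ‖z‖ ≠ 0 := norm_ne_zero_iff.mpr hz
      set u : V n := ‖z‖⁻¹ • z with hu
      have humem : u ∈ Metric.sphere (0 : V n) 1 := by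
        rw [mem_sphere_zero_iff_norm, hu, norm_smul, norm_inv, norm_norm]
        field_simp
      have h1 : Nh (z₀, (0:ℝ)) ≤ Nh (u, (0:ℝ)) := hmin humem
      have h2 : Nh (z, (0:ℝ)) = ‖z‖ * Nh (u, (0:ℝ)) := by
        rw [hu]
        have : z = ‖z‖ • (‖z‖⁻¹ • z) := by rw [smul_inv_smul₀ hznorm]
        conv_lhs => rw [this]
        rw [N_smul hNh, abs_of_pos (by positivity : (0:ℝ) < ‖z‖)]
      rw [h2]
      have : 0 ≤ ‖z‖ := norm_nonneg z
      nlinarith [h1]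

end Stmt0Aux

namespace Stmt0Aux

variable {n : ℕ} {Nh : Heis n → ℝ}

/-- the vertical norm is an exact square root -/
lemma vert_exact (hNh : IsHomNorm Nh) (t : ℝ) :
    Nh ((0:V n), t) = Real.sqrt |t| * Nh ((0:V n), 1) := by
  rcases lt_trichotomy t 0 with ht | ht | ht
  · have h1 : Nh ((0:V n), t) = Nh ((0:V n), -t) := by
      have := hNh.symm ((0:V n), -t)
      simpa [hinv] using this
    have h2 : dil (Real.sqrt (-t)) ((0:V n), 1) = ((0:V n), -t) := by
      simp only [dil, Prod.mk.injEq]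
      refine ⟨smul_zero _, by rw [Real.sq_sqrt (by linarith : (0:ℝ) ≤ -t)]; ring⟩
    have h3 := hNh.homog (Real.sqrt (-t)) (Real.sqrt_pos.mpr (by linarith)) ((0:V n), 1)
    rw [h2] at h3
    rw [h1, h3, abs_of_neg ht]
  · simp [ht]
    exact N_zero' hNh
  · have h2 : dil (Real.sqrt t) ((0:V n), 1) = ((0:V n), t) := by
      simp only [dil, Prod.mk.injEq]
      refine ⟨smul_zero _, by rw [Real.sq_sqrt (le_of_lt ht)]; ring⟩
    have h3 := hNh.homog (Real.sqrt t) (Real.sqrt_pos.mpr ht) ((0:V n), 1)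
    rw [h2] at h3
    rw [h3, abs_of_pos ht]

lemma c0_pos (hNh : IsHomNorm Nh) : 0 < Nh ((0:V n), 1) := by
  rcases (hNh.nonneg ((0:V n), 1)).lt_or_eq with h | h
  · exact h
  · exfalso
    have := (hNh.eq_zero_iff ((0:V n), 1)).mp h.symm
    have h1 : (1:ℝ) = 0 := congrArg Prod.snd this
    norm_num at h1

lemma N_add_vert_le (hNh : IsHomNorm Nh) (z : V n) (t : ℝ) :
    Nh (z, t) ≤ Nh (z, (0:ℝ)) + Nh ((0:V n), t) := by
  have key : hmul ((z, (0:ℝ)) : Heis n) (((0:V n), t) : Heis n) = (z, t) := by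
    rw [hmul_pair, symp_zero_right, Prod.mk.injEq]
    exact ⟨by simp, by ring⟩
  calc Nh (z, t) = Nh (hmul ((z, (0:ℝ)) : Heis n) (((0:V n), t) : Heis n)) := by rw [key]
    _ ≤ Nh (z, (0:ℝ)) + Nh ((0:V n), t) := hNh.triangle _ _

lemma vert_le_of (hNh : IsHomNorm Nh) (z : V n) (t : ℝ) :
    Nh ((0:V n), t) ≤ Nh (z, (0:ℝ)) + Nh (z, t) := by
  have key : hmul (hinv ((z, (0:ℝ)) : Heis n)) ((z, t) : Heis n) = ((0:V n), t) := by
    rw [hmul_hinv]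
    simp [symp_self]
  have h1 : Nh (hinv ((z, (0:ℝ)) : Heis n)) = Nh ((z, (0:ℝ)) : Heis n) := hNh.symm _
  calc Nh ((0:V n), t)
      = Nh (hmul (hinv ((z, (0:ℝ)) : Heis n)) ((z, t) : Heis n)) := by rw [key]
    _ ≤ Nh (hinv ((z, (0:ℝ)) : Heis n)) + Nh (z, t) := hNh.triangle _ _
    _ = Nh (z, (0:ℝ)) + Nh (z, t) := by rw [h1]

end Stmt0Aux

namespace Stmt0Aux

variable {n : ℕ} {Nh : Heis n → ℝ}

/-- horizontal displacement -/
def vv (γ : ℝ → Heis n) (s s' : ℝ) : V n := (γ s').1 - (γ s).1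

/-- vertical displacement (in group terms) -/
def TT (γ : ℝ → Heis n) (s s' : ℝ) : ℝ :=
  (γ s').2 - (γ s).2 - 2 * symp (γ s).1 (γ s').1

lemma E_eq (γ : ℝ → Heis n) (s s' : ℝ) :
    hmul (hinv (γ s)) (γ s') = (vv γ s s', TT γ s s') := hmul_hinv _ _

lemma vv_add (γ : ℝ → Heis n) (a b c : ℝ) : vv γ a c = vv γ a b + vv γ b c := by
  unfold vv; abel

lemma TT_cocycle (γ : ℝ → Heis n) (a b c : ℝ) :
    TT γ a c = TT γ a b + TT γ b c + 2 * symp (vv γ a b) (vv γ b c) := by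
  have h := congrArg Prod.snd (E_cocycle (γ a) (γ b) (γ c))
  rw [E_eq γ a b, E_eq γ b c, E_eq γ a c, hmul_pair] at h
  exact h.symm

lemma TT_self (γ : ℝ → Heis n) (s : ℝ) : TT γ s s = 0 := by
  unfold TT; rw [symp_self]; ring

/-- **Full horizontal speed of infinite geodesics.** -/
theorem full_speed (hNh : IsHomNorm Nh) (γ : ℝ → Heis n)
    (hgeo : ∀ s s' : ℝ, Nh (hmul (hinv (γ s)) (γ s')) = |s - s'|) :
    ∀ s s' : ℝ, s ≤ s' → Nh (vv γ s s', (0:ℝ)) = s' - s := by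
  have hgeo' : ∀ s s' : ℝ, Nh (vv γ s s', TT γ s s') = |s - s'| := by
    intro s s'; rw [← E_eq]; exact hgeo s s'
  have hupper : ∀ s s' : ℝ, Nh (vv γ s s', (0:ℝ)) ≤ |s - s'| := by
    intro s s'
    calc Nh (vv γ s s', (0:ℝ)) ≤ Nh (vv γ s s', TT γ s s') := proj_le hNh _ _
      _ = |s - s'| := hgeo' s s'
  intro s₀ s₁ hle
  by_contra hne
  have habs : |s₀ - s₁| = s₁ - s₀ := by
    rw [abs_sub_comm]; exact abs_of_nonneg (by linarith)
  have hlt : Nh (vv γ s₀ s₁, (0:ℝ)) < s₁ - s₀ := by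
    rcases lt_or_eq_of_le (le_of_le_of_eq (hupper s₀ s₁) habs) with h | h
    · exact h
    · exact absurd h hne
  set η := s₁ - s₀ - Nh (vv γ s₀ s₁, (0:ℝ)) with hηdef
  have hηpos : 0 < η := by rw [hηdef]; linarith
  set x := TT γ s₀ s₁ with hxdef
  -- ## The bridge inequality
  have bridge : ∀ a b : ℝ, a ≤ s₀ → s₁ ≤ b → 0 < Nh (vv γ a b, (0:ℝ)) →
      η * Nh (vv γ a b, (0:ℝ)) ≤ (C1 n Nh)^2 * |x| / 2 := by
    intro a b ha hb hZpos
    have hZne : vv γ a b ≠ 0 := by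
      intro h
      rw [h, N_zero hNh] at hZpos
      exact lt_irrefl 0 hZpos
    have hS2pos : 0 < S2 (vv γ a b) := S2_pos hZne
    have hab : a ≤ b := by linarith
    -- straightened product
    have hstep1 : hmul (hmul (hmul (hinv (γ a)) (γ s₀)) (hmul (hinv (γ s₀)) (γ s₁)))
        (hmul (hinv (γ s₁)) (γ b)) = hmul (hinv (γ a)) (γ b) := by
      rw [E_cocycle, E_cocycle]
    set Q := hmul (hmul (hmul (hinv (γ a)) (γ s₀)) (((vv γ s₀ s₁ : V n), (0:ℝ)) : Heis n))
      (hmul (hinv (γ s₁)) (γ b)) with hQdef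
    have hEab : hmul (hinv (γ a)) (γ b) = (Q.1, Q.2 + (x - 0)) := by
      rw [← hstep1, E_eq γ s₀ s₁]
      exact vert_shift_in_product _ _ _ x 0
    have hQ1 : Q.1 = vv γ a b := by
      have h := congrArg Prod.fst hEab
      rw [E_eq γ a b] at h
      exact h.symm
    have hQ2 : Q.2 = TT γ a b - x := by
      have h := congrArg Prod.snd hEab
      rw [E_eq γ a b] at h
      simp only at h
      linarith [h]
    have hQpair : Q = ((vv γ a b : V n), TT γ a b - x) := by
      rw [← hQ1, ← hQ2]
    -- cost of the straightened product
    have hQcost : Nh Q ≤ (b - a) - η := by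
      have t1 := hNh.triangle (hmul (hmul (hinv (γ a)) (γ s₀))
        (((vv γ s₀ s₁ : V n), (0:ℝ)) : Heis n)) (hmul (hinv (γ s₁)) (γ b))
      have t2 := hNh.triangle (hmul (hinv (γ a)) (γ s₀))
        (((vv γ s₀ s₁ : V n), (0:ℝ)) : Heis n)
      have e1 : Nh (hmul (hinv (γ a)) (γ s₀)) = s₀ - a := by
        rw [hgeo a s₀, abs_sub_comm]; exact abs_of_nonneg (by linarith)
      have e2 : Nh (hmul (hinv (γ s₁)) (γ b)) = b - s₁ := by
        rw [hgeo s₁ b, abs_sub_comm]; exact abs_of_nonneg (by linarith)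
      have e3 : Nh (((vv γ s₀ s₁ : V n), (0:ℝ)) : Heis n) = s₁ - s₀ - η := by
        rw [hηdef]; ring_nf
      rw [hQdef]
      calc Nh (hmul (hmul (hmul (hinv (γ a)) (γ s₀))
            (((vv γ s₀ s₁ : V n), (0:ℝ)) : Heis n)) (hmul (hinv (γ s₁)) (γ b)))
          ≤ Nh (hmul (hmul (hinv (γ a)) (γ s₀)) (((vv γ s₀ s₁ : V n), (0:ℝ)) : Heis n))
            + Nh (hmul (hinv (γ s₁)) (γ b)) := t1
        _ ≤ Nh (hmul (hinv (γ a)) (γ s₀)) + Nh (((vv γ s₀ s₁ : V n), (0:ℝ)) : Heis n)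
            + Nh (hmul (hinv (γ s₁)) (γ b)) := by linarith [t2]
        _ = (b - a) - η := by rw [e1, e2, e3]; ring
    -- shift the vertical back
    set r := x / (4 * S2 (vv γ a b)) with hrdef
    have hmain := shift_cost hNh (vv γ a b) (Jmat n (vv γ a b)) (TT γ a b - x) r
    rw [symp_J_self] at hmain
    have harg : TT γ a b - x + 4 * (r * S2 (vv γ a b)) = TT γ a b := by
      rw [hrdef]; field_simp; ring
    rw [harg] at hmain
    have hleft : b - a = Nh ((vv γ a b : V n), TT γ a b) := by
      rw [hgeo' a b, abs_sub_comm]; exact (abs_of_nonneg (by linarith)).symm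
    have hQval : Nh ((vv γ a b : V n), TT γ a b - x) ≤ (b - a) - η := by
      rw [← hQpair]; exact hQcost
    have hηle : η ≤ 2 * |r| * Nh ((Jmat n (vv γ a b) : V n), (0:ℝ)) := by
      linarith [hmain, hQval, hleft.ge, hleft.le]
    have hNJ : Nh ((Jmat n (vv γ a b) : V n), (0:ℝ))
        ≤ C1 n Nh * Real.sqrt (S2 (vv γ a b)) := by
      have := N_le_C1 hNh (Jmat n (vv γ a b))
      rwa [S2_J] at this
    have hNZ : Nh ((vv γ a b : V n), (0:ℝ)) ≤ C1 n Nh * Real.sqrt (S2 (vv γ a b)) :=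
      N_le_C1 hNh _
    have hrabs : |r| = |x| / (4 * S2 (vv γ a b)) := by
      rw [hrdef, abs_div, abs_of_pos (by positivity : (0:ℝ) < 4 * S2 (vv γ a b))]
    have hsq : Real.sqrt (S2 (vv γ a b)) * Real.sqrt (S2 (vv γ a b)) = S2 (vv γ a b) :=
      Real.mul_self_sqrt (S2_nonneg _)
    have hNZnn : 0 ≤ Nh ((vv γ a b : V n), (0:ℝ)) := hNh.nonneg _
    have hNJnn : 0 ≤ Nh ((Jmat n (vv γ a b) : V n), (0:ℝ)) := hNh.nonneg _
    have hstep : η * Nh ((vv γ a b : V n), (0:ℝ))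
        ≤ 2 * |r| * (Nh ((Jmat n (vv γ a b) : V n), (0:ℝ)) * Nh ((vv γ a b : V n), (0:ℝ))) := by
      have := mul_le_mul_of_nonneg_right hηle hNZnn
      calc η * Nh ((vv γ a b : V n), (0:ℝ))
          ≤ 2 * |r| * Nh ((Jmat n (vv γ a b) : V n), (0:ℝ)) * Nh ((vv γ a b : V n), (0:ℝ)) := this
        _ = 2 * |r| * (Nh ((Jmat n (vv γ a b) : V n), (0:ℝ)) * Nh ((vv γ a b : V n), (0:ℝ))) := by ring
    have hprod : Nh ((Jmat n (vv γ a b) : V n), (0:ℝ)) * Nh ((vv γ a b : V n), (0:ℝ))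
        ≤ (C1 n Nh * Real.sqrt (S2 (vv γ a b))) * (C1 n Nh * Real.sqrt (S2 (vv γ a b))) :=
      mul_le_mul hNJ hNZ hNZnn (mul_nonneg (C1_nonneg hNh) (Real.sqrt_nonneg _))
    have e : (C1 n Nh * Real.sqrt (S2 (vv γ a b))) * (C1 n Nh * Real.sqrt (S2 (vv γ a b)))
        = (C1 n Nh)^2 * S2 (vv γ a b) := by
      rw [mul_mul_mul_comm, hsq]; ring
    rw [e] at hprod
    have hfin : 2 * |r| * ((C1 n Nh)^2 * S2 (vv γ a b)) = (C1 n Nh)^2 * |x| / 2 := by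
      rw [hrabs]
      field_simp
      ring
    have h2r : 0 ≤ 2 * |r| := by positivity
    calc η * Nh ((vv γ a b : V n), (0:ℝ))
        ≤ 2 * |r| * (Nh ((Jmat n (vv γ a b) : V n), (0:ℝ)) * Nh ((vv γ a b : V n), (0:ℝ))) := hstep
      _ ≤ 2 * |r| * ((C1 n Nh)^2 * S2 (vv γ a b)) := mul_le_mul_of_nonneg_left hprod h2r
      _ = (C1 n Nh)^2 * |x| / 2 := hfin
  -- ## dichotomy
  by_cases hA : ∀ M : ℝ, ∃ a b : ℝ, a ≤ s₀ ∧ s₁ ≤ b ∧ M ≤ Nh (vv γ a b, (0:ℝ))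
  · -- unbounded chords: contradiction via the bridge
    obtain ⟨a, b, ha, hb, hM⟩ := hA ((C1 n Nh)^2 * |x| / 2 / η + 1)
    have hMpos : 0 < (C1 n Nh)^2 * |x| / 2 / η + 1 := by
      have h0 : 0 ≤ (C1 n Nh)^2 * |x| / 2 / η :=
        div_nonneg (by positivity) (le_of_lt hηpos)
      linarith
    have hZpos : 0 < Nh (vv γ a b, (0:ℝ)) := lt_of_lt_of_le hMpos hM
    have hbr := bridge a b ha hb hZpos
    have h1 : η * ((C1 n Nh)^2 * |x| / 2 / η + 1) ≤ η * Nh (vv γ a b, (0:ℝ)) :=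
      mul_le_mul_of_nonneg_left hM (le_of_lt hηpos)
    have h2 : η * ((C1 n Nh)^2 * |x| / 2 / η + 1) = (C1 n Nh)^2 * |x| / 2 + η := by
      field_simp
    linarith
  · -- bounded chords: the horizontal trace is bounded, impossible for a geodesic
    push_neg at hA
    obtain ⟨M, hM'⟩ := hA
    have hMpos : 0 < M := lt_of_le_of_lt (hNh.nonneg _) (hM' s₀ s₁ le_rfl le_rfl)
    obtain ⟨m₀, hm₀pos, hm₀⟩ := exists_m0 hNh
    set KK := (2*M + (s₁ - s₀) + 1) / m₀ with hKKdef
    have hKKpos : 0 < KK := by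
      rw [hKKdef]
      apply div_pos (by linarith) hm₀pos
    have hbound : ∀ t : ℝ, ‖vv γ s₀ t‖ ≤ KK := by
      intro t
      rw [hKKdef, le_div_iff₀ hm₀pos]
      rcases le_or_gt s₁ t with h | h
      · have h1 := hM' s₀ t le_rfl h
        have h2 := hm₀ (vv γ s₀ t)
        nlinarith [norm_nonneg (vv γ s₀ t)]
      rcases le_or_gt t s₀ with h' | h'
      · have hsplit : vv γ s₀ t = vv γ s₀ s₁ + vv γ s₁ t := vv_add γ s₀ s₁ t
        have hn1 : ‖vv γ s₁ t‖ = ‖vv γ t s₁‖ := by unfold vv; exact norm_sub_rev _ _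
        have h1 := hM' t s₁ h' le_rfl
        have h2 := hm₀ (vv γ t s₁)
        have h3 := hm₀ (vv γ s₀ s₁)
        have h4 : Nh (vv γ s₀ s₁, (0:ℝ)) ≤ s₁ - s₀ := le_of_le_of_eq (hupper s₀ s₁) habs
        have h5 : ‖vv γ s₀ t‖ ≤ ‖vv γ s₀ s₁‖ + ‖vv γ s₁ t‖ := by
          rw [hsplit]; exact norm_add_le _ _
        rw [hn1] at h5
        nlinarith [norm_nonneg (vv γ s₀ s₁), norm_nonneg (vv γ t s₁),
          norm_nonneg (vv γ s₀ t)]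
      · have h1 := hm₀ (vv γ s₀ t)
        have h2 : Nh (vv γ s₀ t, (0:ℝ)) ≤ t - s₀ := by
          have := hupper s₀ t
          rwa [abs_sub_comm, abs_of_nonneg (by linarith : (0:ℝ) ≤ t - s₀)] at this
        nlinarith [norm_nonneg (vv γ s₀ t)]
    set c₀ := Nh (((0:V n), (1:ℝ)) : Heis n) with hc₀def
    have hc₀pos : 0 < c₀ := c0_pos hNh
    have hTub : ∀ s : ℝ, |TT γ s (s+1)| ≤ (2/c₀)^2 := by
      intro s
      have h1 : Nh (((0:V n), TT γ s (s+1)) : Heis n) ≤ 2 := by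
        have hv := vert_le_of hNh (vv γ s (s+1)) (TT γ s (s+1))
        have h2 := hgeo' s (s+1)
        have h3 := hupper s (s+1)
        have habs1 : |s - (s+1)| = 1 := by
          rw [abs_sub_comm]; norm_num
        rw [habs1] at h2 h3
        linarith
      rw [vert_exact hNh, ← hc₀def] at h1
      have h4 : Real.sqrt |TT γ s (s+1)| ≤ 2/c₀ := by
        rw [le_div_iff₀ hc₀pos]; exact h1
      calc |TT γ s (s+1)| = (Real.sqrt |TT γ s (s+1)|)^2 :=
            (Real.sq_sqrt (abs_nonneg _)).symm
        _ ≤ (2/c₀)^2 := pow_le_pow_left₀ (Real.sqrt_nonneg _) h4 2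
    set Cst := (2/c₀)^2 + 4*KK^2 with hCstdef
    have hCstnn : 0 ≤ Cst := by rw [hCstdef]; positivity
    have hInd : ∀ k : ℕ, |TT γ s₀ (s₀ + k)| ≤ k * Cst := by
      intro k
      induction k with
      | zero => simp [TT_self]
      | succ k ih =>
        have hmid : (s₀ + ((k:ℕ)+1:ℝ)) = (s₀ + k) + 1 := by push_cast; ring
        have hco := TT_cocycle γ s₀ (s₀ + k) (s₀ + ((k:ℕ)+1:ℝ))
        have hstepv : |TT γ (s₀ + (k:ℝ)) (s₀ + ((k:ℕ)+1:ℝ))| ≤ (2/c₀)^2 := by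
          rw [hmid]; exact hTub (s₀ + k)
        have hcross : |symp (vv γ s₀ (s₀ + k)) (vv γ (s₀ + (k:ℝ)) (s₀ + ((k:ℕ)+1:ℝ)))|
            ≤ KK * (2*KK) := by
          have hb1 : ‖vv γ s₀ (s₀ + k)‖ ≤ KK := hbound _
          have hb2 : ‖vv γ (s₀ + (k:ℝ)) (s₀ + ((k:ℕ)+1:ℝ))‖ ≤ 2*KK := by
            have hsplit : vv γ (s₀ + (k:ℝ)) (s₀ + ((k:ℕ)+1:ℝ))
                = vv γ s₀ (s₀ + ((k:ℕ)+1:ℝ)) - vv γ s₀ (s₀ + k) := by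
              unfold vv; abel
            rw [hsplit]
            calc ‖vv γ s₀ (s₀ + ((k:ℕ)+1:ℝ)) - vv γ s₀ (s₀ + k)‖
                ≤ ‖vv γ s₀ (s₀ + ((k:ℕ)+1:ℝ))‖ + ‖vv γ s₀ (s₀ + k)‖ := norm_sub_le _ _
              _ ≤ KK + KK := add_le_add (hbound _) (hbound _)
              _ = 2*KK := by ring
          calc |symp (vv γ s₀ (s₀ + k)) (vv γ (s₀ + (k:ℝ)) (s₀ + ((k:ℕ)+1:ℝ)))|
              ≤ Real.sqrt (S2 (vv γ s₀ (s₀ + k)))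
                * Real.sqrt (S2 (vv γ (s₀ + (k:ℝ)) (s₀ + ((k:ℕ)+1:ℝ)))) := abs_symp_le _ _
            _ = ‖vv γ s₀ (s₀ + k)‖ * ‖vv γ (s₀ + (k:ℝ)) (s₀ + ((k:ℕ)+1:ℝ))‖ := by
                rw [norm_eq_sqrt_S2, norm_eq_sqrt_S2]
            _ ≤ KK * (2*KK) := by
                apply mul_le_mul hb1 hb2 (norm_nonneg _) (le_of_lt hKKpos)
        have habs2 : |TT γ s₀ (s₀ + ((k:ℕ)+1:ℝ))|
            ≤ |TT γ s₀ (s₀ + k)| + |TT γ (s₀ + (k:ℝ)) (s₀ + ((k:ℕ)+1:ℝ))|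
              + 2 * |symp (vv γ s₀ (s₀ + k)) (vv γ (s₀ + (k:ℝ)) (s₀ + ((k:ℕ)+1:ℝ)))| := by
          rw [hco]
          calc |TT γ s₀ (s₀ + k) + TT γ (s₀ + (k:ℝ)) (s₀ + ((k:ℕ)+1:ℝ))
              + 2 * symp (vv γ s₀ (s₀ + k)) (vv γ (s₀ + (k:ℝ)) (s₀ + ((k:ℕ)+1:ℝ)))|
              ≤ |TT γ s₀ (s₀ + k) + TT γ (s₀ + (k:ℝ)) (s₀ + ((k:ℕ)+1:ℝ))|
                + |2 * symp (vv γ s₀ (s₀ + k)) (vv γ (s₀ + (k:ℝ)) (s₀ + ((k:ℕ)+1:ℝ)))| :=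
                abs_add_le _ _
            _ ≤ |TT γ s₀ (s₀ + k)| + |TT γ (s₀ + (k:ℝ)) (s₀ + ((k:ℕ)+1:ℝ))|
                + 2 * |symp (vv γ s₀ (s₀ + k)) (vv γ (s₀ + (k:ℝ)) (s₀ + ((k:ℕ)+1:ℝ)))| := by
                rw [abs_mul]
                have := abs_add_le (TT γ s₀ (s₀ + k)) (TT γ (s₀ + (k:ℝ)) (s₀ + ((k:ℕ)+1:ℝ)))
                simp only [abs_two]
                linarith
        have h2c : 2 * |symp (vv γ s₀ (s₀ + (k:ℝ))) (vv γ (s₀ + (k:ℝ)) (s₀ + ((k:ℕ)+1:ℝ)))|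
            ≤ 4 * KK^2 := by
          linarith [hcross, show KK * (2*KK) * 2 = 4*KK^2 from by ring]
        push_cast
        refine le_trans habs2 ?_
        rw [show ((k:ℝ)+1) * Cst = (k:ℝ) * Cst + ((2/c₀)^2 + 4*KK^2) by rw [hCstdef]; ring]
        exact le_trans (add_le_add (add_le_add ih hstepv) h2c) (le_of_eq (by ring))
    -- final contradiction
    obtain ⟨k, hk⟩ := exists_nat_gt (max (max (4*c₀^2*Cst) (2*M)) (s₁ - s₀))
    have hk1 : 4*c₀^2*Cst < k :=
      lt_of_le_of_lt (le_trans (le_max_left _ _) (le_max_left _ _)) hk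
    have hk2 : 2*M < k :=
      lt_of_le_of_lt (le_trans (le_max_right _ _) (le_max_left _ _)) hk
    have hk3 : s₁ - s₀ < k := lt_of_le_of_lt (le_max_right _ _) hk
    have hkpos : (0:ℝ) < k := by linarith
    have hgk : Nh (vv γ s₀ (s₀ + k), TT γ s₀ (s₀ + k)) = k := by
      rw [hgeo' s₀ (s₀ + k), abs_sub_comm]
      rw [show s₀ + (k:ℝ) - s₀ = (k:ℝ) by ring]
      exact abs_of_nonneg (le_of_lt hkpos)
    have hNv : Nh (vv γ s₀ (s₀ + k), (0:ℝ)) < M :=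
      hM' s₀ (s₀ + k) le_rfl (by linarith)
    have hvert : Nh (((0:V n), TT γ s₀ (s₀ + k)) : Heis n)
        = Real.sqrt |TT γ s₀ (s₀ + k)| * c₀ := by
      rw [vert_exact hNh, ← hc₀def]
    have hsqb : c₀ * Real.sqrt ((k:ℝ) * Cst) ≤ (k:ℝ)/2 := by
      have hkC : (0:ℝ) ≤ (k:ℝ)*Cst := mul_nonneg (le_of_lt hkpos) hCstnn
      have h1 : (c₀ * Real.sqrt ((k:ℝ)*Cst))^2 = c₀^2 * ((k:ℝ)*Cst) := by
        rw [mul_pow, Real.sq_sqrt hkC]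
      have h2 : c₀^2*((k:ℝ)*Cst) ≤ ((k:ℝ)/2)^2 := by
        have hmul := mul_le_mul_of_nonneg_right hk1.le hkpos.le
        have e1 : c₀^2*((k:ℝ)*Cst) = (4*c₀^2*Cst*(k:ℝ))/4 := by ring
        have e2 : ((k:ℝ)/2)^2 = ((k:ℝ)*(k:ℝ))/4 := by ring
        rw [e1, e2]
        gcongr
      have h3 : (0:ℝ) ≤ c₀ * Real.sqrt ((k:ℝ)*Cst) :=
        mul_nonneg (le_of_lt hc₀pos) (Real.sqrt_nonneg _)
      calc c₀ * Real.sqrt ((k:ℝ)*Cst)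
          = Real.sqrt ((c₀ * Real.sqrt ((k:ℝ)*Cst))^2) := (Real.sqrt_sq h3).symm
        _ ≤ Real.sqrt (((k:ℝ)/2)^2) := Real.sqrt_le_sqrt (by rw [h1]; exact h2)
        _ = (k:ℝ)/2 := Real.sqrt_sq (by linarith)
    have hTk : Real.sqrt |TT γ s₀ (s₀ + k)| ≤ Real.sqrt ((k:ℝ) * Cst) :=
      Real.sqrt_le_sqrt (hInd k)
    have hchain := N_add_vert_le hNh (vv γ s₀ (s₀ + (k:ℝ))) (TT γ s₀ (s₀ + (k:ℝ)))
    rw [hgk, hvert] at hchain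
    have hfin : Real.sqrt |TT γ s₀ (s₀ + k)| * c₀ ≤ (k:ℝ)/2 := by
      calc Real.sqrt |TT γ s₀ (s₀ + k)| * c₀ = c₀ * Real.sqrt |TT γ s₀ (s₀ + k)| := by ring
        _ ≤ c₀ * Real.sqrt ((k:ℝ) * Cst) :=
            mul_le_mul_of_nonneg_left hTk (le_of_lt hc₀pos)
        _ ≤ (k:ℝ)/2 := hsqb
    linarith

end Stmt0Aux

namespace Stmt0Aux

variable {n : ℕ} {Nh : Heis n → ℝ}

/-- The backward direction: strict convexity implies GLP. -/
lemma sc_to_glp (hNh : IsHomNorm Nh)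
    (hsc : StrictlyConvexNorm (fun z : V n => Nh (z, (0 : ℝ)))) :
    GLP n (fun g g' => Nh (hmul (hinv g) g')) := by
  intro γ hgeo0
  have hgeo : ∀ s s' : ℝ, Nh (hmul (hinv (γ s)) (γ s')) = |s - s'| := hgeo0
  have hfs := full_speed hNh γ hgeo
  have hgeo' : ∀ s s' : ℝ, Nh (vv γ s s', TT γ s s') = |s - s'| := by
    intro s s'; rw [← E_eq]; exact hgeo s s'
  have hvne : ∀ s s' : ℝ, s < s' → vv γ s s' ≠ 0 := by
    intro s s' h hv
    have h2 := hfs s s' (le_of_lt h)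
    rw [hv, N_zero hNh] at h2
    linarith
  -- collinearity of consecutive increments, with the forced ratio
  have hratio : ∀ a b c : ℝ, a < b → b < c →
      vv γ b c = ((c-b)/(b-a)) • vv γ a b := by
    intro a b c hab hbc
    have hadd : Nh ((vv γ a b + vv γ b c : V n), (0:ℝ))
        = Nh ((vv γ a b : V n), (0:ℝ)) + Nh ((vv γ b c : V n), (0:ℝ)) := by
      rw [← vv_add, hfs a b hab.le, hfs b c hbc.le, hfs a c (by linarith)]
      ring
    obtain ⟨α, hαpos, hα⟩ := hsc (vv γ a b) (vv γ b c) (hvne a b hab) (hvne b c hbc) hadd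
    have h1 : Nh ((vv γ b c : V n), (0:ℝ)) = α * Nh ((vv γ a b : V n), (0:ℝ)) := by
      rw [hα, N_smul hNh, abs_of_pos hαpos]
    rw [hfs a b hab.le, hfs b c hbc.le] at h1
    have hba : b - a ≠ 0 := ne_of_gt (by linarith)
    have hαval : α = (c-b)/(b-a) := by
      rw [eq_div_iff hba]; linarith
    rw [hα, hαval]
  -- forward scaling
  have hforward : ∀ s d : ℝ, 0 < d → vv γ s (s + d) = d • vv γ s (s+1) := by
    intro s d hd
    rcases lt_trichotomy d 1 with h | h | h
    · have h1 := hratio s (s+d) (s+1) (by linarith) (by linarith)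
      have hsc1 : ((s+1) - (s+d))/((s+d) - s) = (1-d)/d := by
        rw [show (s+1) - (s+d) = 1 - d by ring, show (s+d) - s = d by ring]
      rw [hsc1] at h1
      have h2 : vv γ s (s+1) = vv γ s (s+d) + vv γ (s+d) (s+1) := vv_add γ s (s+d) (s+1)
      rw [h1] at h2
      rw [h2]
      match_scalars
      field_simp
      ring
    · rw [h, one_smul]
    · have h1 := hratio s (s+1) (s+d) (by linarith) (by linarith)
      have hsc1 : ((s+d) - (s+1))/((s+1) - s) = d - 1 := by
        rw [show (s+d) - (s+1) = d - 1 by ring, show (s+1) - s = (1:ℝ) by ring, div_one]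
      rw [hsc1] at h1
      have h2 : vv γ s (s+d) = vv γ s (s+1) + vv γ (s+1) (s+d) := vv_add γ s (s+1) (s+d)
      rw [h1] at h2
      rw [h2]
      match_scalars
      ring
  -- the unit increment is constant
  have hconst : ∀ s s' : ℝ, s < s' → vv γ s (s+1) = vv γ s' (s'+1) := by
    intro s s' hss
    set T := max s s' + 2 with hT
    have hTs : 0 < T - s := by
      have := le_max_left s s'
      rw [hT]; linarith
    have hTs' : 0 < T - s' := by
      have := le_max_right s s'
      rw [hT]; linarith
    have h1 : vv γ s T = (T - s) • vv γ s (s+1) := by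
      have := hforward s (T - s) hTs
      rwa [show s + (T - s) = T by ring] at this
    have h2 : vv γ s' T = (T - s') • vv γ s' (s'+1) := by
      have := hforward s' (T - s') hTs'
      rwa [show s' + (T - s') = T by ring] at this
    have h3 : vv γ s s' = (s' - s) • vv γ s (s+1) := by
      have := hforward s (s' - s) (by linarith)
      rwa [show s + (s' - s) = s' by ring] at this
    have h4 : vv γ s T = vv γ s s' + vv γ s' T := vv_add γ s s' T
    rw [h1, h2, h3] at h4
    have h5 : (T - s') • vv γ s (s+1) = (T - s') • vv γ s' (s'+1) := by
      have e : (T - s') • vv γ s (s+1)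
          = (T - s) • vv γ s (s+1) - (s' - s) • vv γ s (s+1) := by
        rw [← sub_smul]; congr 1; ring
      rw [e, h4]; abel
    exact smul_right_injective (V n) (ne_of_gt hTs') h5
  -- all increments are multiples of w := vv γ 0 1
  have hw : ∀ s s' : ℝ, s < s' → vv γ s s' = (s' - s) • vv γ 0 1 := by
    intro s s' hss
    have h1 : vv γ s s' = (s' - s) • vv γ s (s+1) := by
      have := hforward s (s' - s) (by linarith)
      rwa [show s + (s' - s) = s' by ring] at this
    have h01 : (0:ℝ) + 1 = 1 := zero_add 1
    have h2 : vv γ s (s+1) = vv γ 0 1 := by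
      rcases lt_trichotomy s 0 with h | h | h
      · have := hconst s 0 h
        rwa [h01] at this
      · rw [h, h01]
      · have := (hconst 0 s h).symm
        rwa [h01] at this
    rw [h1, h2]
  -- vertical part vanishes
  set c₀ := Nh (((0:V n), (1:ℝ)) : Heis n) with hc₀def
  have hc₀pos : 0 < c₀ := c0_pos hNh
  have hTadd : ∀ a b c : ℝ, a < b → b < c → TT γ a c = TT γ a b + TT γ b c := by
    intro a b c h1 h2
    have hco := TT_cocycle γ a b c
    rw [hw a b h1, hw b c h2, symp_smul_left, symp_smul_right, symp_self] at hco
    rw [hco]; ring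
  have hq : ∀ s s' : ℝ, s < s' → |TT γ s s'| ≤ (2*(s'-s)/c₀)^2 := by
    intro s s' hss
    have h1 : Nh (((0:V n), TT γ s s') : Heis n) ≤ 2*(s'-s) := by
      have hv := vert_le_of hNh (vv γ s s') (TT γ s s')
      have h2 := hgeo' s s'
      have h3 := hfs s s' hss.le
      rw [abs_sub_comm, abs_of_nonneg (by linarith : (0:ℝ) ≤ s' - s)] at h2
      linarith
    rw [vert_exact hNh, ← hc₀def] at h1
    have h4 : Real.sqrt |TT γ s s'| ≤ 2*(s'-s)/c₀ := by
      rw [le_div_iff₀ hc₀pos]; exact h1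
    calc |TT γ s s'| = (Real.sqrt |TT γ s s'|)^2 := (Real.sq_sqrt (abs_nonneg _)).symm
      _ ≤ (2*(s'-s)/c₀)^2 := pow_le_pow_left₀ (Real.sqrt_nonneg _) h4 2
  have hsub : ∀ (k : ℕ) (s δ : ℝ), 0 < δ →
      |TT γ s (s + (k:ℝ)*δ)| ≤ (k:ℝ) * (2*δ/c₀)^2 := by
    intro k
    induction k with
    | zero => intro s δ hδ; simp [TT_self]
    | succ k ih =>
      intro s δ hδ
      rcases Nat.eq_zero_or_pos k with rfl | hk
      · have h1 := hq s (s + δ) (by linarith)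
        rw [show s + δ - s = δ by ring] at h1
        push_cast
        rw [show s + 1*δ = s + δ by ring]
        linarith
      · have hkpos : (0:ℝ) < k := by exact_mod_cast hk
        have hsplit := hTadd s (s + (k:ℝ)*δ) (s + ((k:ℕ)+1:ℝ)*δ)
          (by nlinarith) (by nlinarith)
        have h1 := ih s δ hδ
        have h2 := hq (s + (k:ℝ)*δ) (s + ((k:ℕ)+1:ℝ)*δ) (by nlinarith)
        rw [show s + ((k:ℕ)+1:ℝ)*δ - (s + (k:ℝ)*δ) = δ by push_cast; ring] at h2
        push_cast
        push_cast at hsplit h1 h2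
        calc |TT γ s (s + ((k:ℝ)+1)*δ)|
            ≤ |TT γ s (s + (k:ℝ)*δ)| + |TT γ (s + (k:ℝ)*δ) (s + ((k:ℝ)+1)*δ)| := by
              rw [hsplit]; exact abs_add_le _ _
          _ ≤ (k:ℝ) * (2*δ/c₀)^2 + (2*δ/c₀)^2 := add_le_add h1 h2
          _ = ((k:ℝ)+1) * (2*δ/c₀)^2 := by ring
  have hTzero : ∀ s s' : ℝ, s < s' → TT γ s s' = 0 := by
    intro s s' hss
    by_contra hTne
    have hTpos : 0 < |TT γ s s'| := abs_pos.mpr hTne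
    obtain ⟨k, hk⟩ := exists_nat_gt (max (4*(s'-s)^2/(c₀^2 * |TT γ s s'|)) 0)
    have hk0 : (0:ℝ) < k := lt_of_le_of_lt (le_max_right _ _) hk
    have hk1 : 4*(s'-s)^2/(c₀^2 * |TT γ s s'|) < k := lt_of_le_of_lt (le_max_left _ _) hk
    set δ := (s'-s)/(k:ℝ) with hδdef
    have hδpos : 0 < δ := by
      rw [hδdef]
      exact div_pos (by linarith) hk0
    have h1 := hsub k s δ hδpos
    rw [show s + (k:ℝ)*δ = s' by rw [hδdef]; field_simp; ring] at h1
    have h2 : (k:ℝ) * (2*δ/c₀)^2 = 4*(s'-s)^2/(c₀^2 * (k:ℝ)) := by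
      rw [hδdef]; field_simp; ring
    rw [h2] at h1
    -- from hk1 : 4Δ²/(c₀²|T|) < k, get 4Δ²/(c₀²k) < |T|
    have h3 : 4*(s'-s)^2 < (k:ℝ) * (c₀^2 * |TT γ s s'|) := by
      rw [div_lt_iff₀ (by positivity)] at hk1
      linarith
    have h4 : 4*(s'-s)^2/(c₀^2 * (k:ℝ)) < |TT γ s s'| := by
      rw [div_lt_iff₀ (by positivity)]
      calc 4*(s'-s)^2 < (k:ℝ) * (c₀^2 * |TT γ s s'|) := h3
        _ = |TT γ s s'| * (c₀^2 * (k:ℝ)) := by ring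
    linarith
  -- assemble the line
  refine ⟨γ 0, (((vv γ 0 1 : V n), 2 * symp (γ 0).1 (vv γ 0 1)) : Heis n), ?_⟩
  intro s
  have hfst : (γ s).1 = (γ 0).1 + s • vv γ 0 1 := by
    rcases lt_trichotomy s 0 with h | h | h
    · have h1 := hw s 0 h
      have h2 : (γ 0).1 - (γ s).1 = (0 - s) • vv γ 0 1 := h1
      have h3 : (γ s).1 = (γ 0).1 - (0 - s) • vv γ 0 1 := by
        rw [← h2]; abel
      rw [h3]
      match_scalars <;> ring
    · rw [h]
      simp
    · have h1 := hw 0 s h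
      have h2 : (γ s).1 - (γ 0).1 = (s - 0) • vv γ 0 1 := h1
      have h3 : (γ s).1 = (γ 0).1 + (s - 0) • vv γ 0 1 := by
        rw [← h2]; abel
      rw [h3]
      match_scalars <;> ring
  have hsnd : (γ s).2 = (γ 0).2 + s * (2 * symp (γ 0).1 (vv γ 0 1)) := by
    rcases lt_trichotomy s 0 with h | h | h
    · have h1 := hTzero s 0 h
      unfold TT at h1
      have h2 : symp (γ s).1 (γ 0).1 = - (s * symp (γ 0).1 (vv γ 0 1)) := by
        rw [hfst, symp_add_left, symp_smul_left, symp_self,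
          symp_add_comm ((γ 0).1) (vv γ 0 1)]
        ring
      linarith [h1, h2]
    · rw [h]; simp
    · have h1 := hTzero 0 s h
      unfold TT at h1
      have h2 : symp (γ 0).1 (γ s).1 = s * symp (γ 0).1 (vv γ 0 1) := by
        rw [hfst, symp_add_right, symp_smul_right, symp_self]
        ring
      linarith [h1, h2]
  calc γ s = ((γ s).1, (γ s).2) := rfl
    _ = ((γ 0).1 + s • vv γ 0 1, (γ 0).2 + s * (2 * symp (γ 0).1 (vv γ 0 1))) := by
        rw [← hfst, ← hsnd]
    _ = γ 0 + s • (((vv γ 0 1 : V n), 2 * symp (γ 0).1 (vv γ 0 1)) : Heis n) := rfl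

end Stmt0Aux

/-- Let `N̂` be a homogeneous norm on `ℍⁿ`, `d = d_N̂` the induced
left-invariant homogeneous distance, and `N(z) = N̂(z,0)` the associated norm on `ℝ^{2n}`.
Then `(ℍⁿ, d)` has the geodesic linearity property iff `N` is strictly convex. -/
theorem stmt0 (n : ℕ) (Nh : Heis n → ℝ) (hNh : IsHomNorm Nh) :
    GLP n (fun g g' => Nh (hmul (hinv g) g')) ↔
      StrictlyConvexNorm (fun z : V n => Nh (z, (0 : ℝ))) :=
  ⟨Stmt0Aux.glp_to_sc hNh, Stmt0Aux.sc_to_glp hNh⟩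

end
end

section
/- Let N be a norm on ℝ^{2n}, T>0, g∈ℍⁿ with g≠e, and let v be an optimal control for the energy problem (P) steering e to g in time T. Then every Pontryagin multiplier (λ₀,λ) associated to v is normal, i.e. λ₀=1. -/
open MeasureTheory Set

noncomputable section

lemma Jmat_apply {n : ℕ} (z : V n) (j : Fin (2 * n)) :
    Jmat n z j = if h : (j : ℕ) < n then -z ⟨n + (j : ℕ), by have := j.isLt; omega⟩
      else z ⟨(j : ℕ) - n, by have := j.isLt; omega⟩ := rfl

lemma Jmat_add {n : ℕ} (z w : V n) : Jmat n (z + w) = Jmat n z + Jmat n w := by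
  ext j
  show Jmat n (z + w) j = Jmat n z j + Jmat n w j
  rw [Jmat_apply, Jmat_apply, Jmat_apply]
  by_cases h : (j : ℕ) < n <;> simp [h, PiLp.add_apply] <;> ring

lemma Jmat_smul {n : ℕ} (c : ℝ) (z : V n) : Jmat n (c • z) = c • Jmat n z := by
  ext j
  show Jmat n (c • z) j = c • Jmat n z j
  rw [Jmat_apply, Jmat_apply]
  by_cases h : (j : ℕ) < n <;> simp [h, PiLp.smul_apply, smul_eq_mul, mul_neg]

lemma Jmat_neg {n : ℕ} (z : V n) : Jmat n (-z) = -Jmat n z := by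
  have := Jmat_smul (-1 : ℝ) z
  simpa using this

/-- `Jmat` as a continuous linear map. -/
def JCLM (n : ℕ) : V n →L[ℝ] V n :=
  LinearMap.toContinuousLinearMap
    { toFun := Jmat n
      map_add' := Jmat_add
      map_smul' := Jmat_smul }

lemma JCLM_apply {n : ℕ} (z : V n) : JCLM n z = Jmat n z := rfl

lemma Jmat_eq_zero {n : ℕ} (z : V n) (h : Jmat n z = 0) : z = 0 := by
  ext i
  have hi := i.isLt
  show z i = 0
  by_cases hin : (i : ℕ) < n
  · have hj : (n + (i : ℕ)) < 2 * n := by omega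
    have h1 : Jmat n z ⟨n + (i : ℕ), hj⟩ = 0 := by rw [h]; rfl
    rw [Jmat_apply] at h1
    have hnn : ¬ ((⟨n + (i : ℕ), hj⟩ : Fin (2 * n)) : ℕ) < n := by simp
    rw [dif_neg hnn] at h1
    have he : (⟨((⟨n + (i : ℕ), hj⟩ : Fin (2 * n)) : ℕ) - n, by omega⟩ : Fin (2 * n)) = i := by
      ext; simp
    rwa [he] at h1
  · have hj : ((i : ℕ) - n) < 2 * n := by omega
    have h1 : Jmat n z ⟨(i : ℕ) - n, hj⟩ = 0 := by rw [h]; rfl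
    rw [Jmat_apply] at h1
    have hlt : ((⟨(i : ℕ) - n, hj⟩ : Fin (2 * n)) : ℕ) < n := by simp; omega
    rw [dif_pos hlt] at h1
    have he : (⟨n + ((⟨(i : ℕ) - n, hj⟩ : Fin (2 * n)) : ℕ), by simp; omega⟩ : Fin (2 * n)) = i := by
      ext; simp; omega
    rw [he] at h1
    exact neg_eq_zero.mp h1

lemma dot_add_right {n : ℕ} (p z w : V n) : dot p (z + w) = dot p z + dot p w := by
  simp only [dot, PiLp.add_apply, mul_add, Finset.sum_add_distrib]

lemma dot_self_nonneg {n : ℕ} (p : V n) : 0 ≤ dot p p :=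
  Finset.sum_nonneg fun i _ => mul_self_nonneg _

lemma dot_self_eq_zero {n : ℕ} (p : V n) (h : dot p p = 0) : p = 0 := by
  ext i
  have h1 := (Finset.sum_eq_zero_iff_of_nonneg (fun i _ => mul_self_nonneg (p i))).mp h
    i (Finset.mem_univ i)
  show p i = 0
  nlinarith

lemma symp_zero_left {n : ℕ} (z : V n) : symp (0 : V n) z = 0 := by
  simp [symp]

/-- Every Pontryagin multiplier `(λ₀, λ)` associated to an optimal
control of the energy problem (with `g ≠ e`) is normal: `λ₀ = 1`. -/
theorem stmt9 (n : ℕ) (N : V n → ℝ) (hN : IsNorm N) (T : ℝ) (hT : 0 < T)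
    (g : Heis n) (hg : g ≠ ((0 : V n), (0 : ℝ))) (v : ℝ → V n)
    (hopt : OptimalEnergy n N T g v) (l0 : ℝ) (hl0 : l0 = 0 ∨ l0 = 1)
    (m : PMP n N T v l0) : l0 = 1 := by
  rcases hl0 with hl0 | hl0
  · exfalso
    subst hl0
    -- Step 1: afun ≡ 0 on [0,T]
    have hafz : ∀ s ∈ Icc (0:ℝ) T, afun n v m.lam m.k s = 0 := by
      intro s hs
      set a := afun n v m.lam m.k s with ha
      have h := m.argmin s hs (v s + a)
      simp only [zero_mul, zero_sub, dot_add_right] at h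
      have haa : dot a a ≤ 0 := by linarith
      exact dot_self_eq_zero a (le_antisymm haa (dot_self_nonneg a))
    have h0T : (0:ℝ) ∈ Icc (0:ℝ) T := ⟨le_refl _, hT.le⟩
    -- Step 2: lam 0 = 0
    have htrajI0 : trajI n v 0 = 0 := by simp [trajI]
    have hJ0 : Jmat n (0 : V n) = 0 := by
      have h := Jmat_smul (0:ℝ) (0 : V n)
      simpa using h
    have hlam0 : m.lam 0 = 0 := by
      have h := hafz 0 h0T
      rw [afun, htrajI0, hJ0, smul_zero, sub_zero] at h
      exact h
    by_cases hk : m.k = 0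
    · exact m.nontriv ⟨rfl, hk, hlam0⟩
    · -- Step 3: trajI ≡ 0 on [0,T]
      have hvint : ∀ s ∈ Icc (0:ℝ) T, IntervalIntegrable v volume 0 s := by
        intro s hs
        rw [intervalIntegrable_iff_integrableOn_Icc_of_le hs.1]
        exact hopt.1.1.mono_set (Icc_subset_Icc le_rfl hs.2)
      have htrajI : ∀ s ∈ Icc (0:ℝ) T, trajI n v s = 0 := by
        intro s hs
        have heq := hafz s hs
        rw [afun, m.lam_eq s hs, hlam0, zero_add] at heq
        have hcomm : (∫ u in (0:ℝ)..s, Jmat n (v u)) = Jmat n (∫ u in (0:ℝ)..s, v u) := by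
          have h := (JCLM n).intervalIntegral_comp_comm (hvint s hs)
          simpa [JCLM_apply] using h
        rw [trajI] at heq ⊢
        rw [hcomm, Jmat_neg, smul_neg, sub_neg_eq_add, ← two_smul ℝ, smul_smul] at heq
        have h2 : (2 : ℝ) * (2 * m.k) ≠ 0 := by
          simp [hk]
        have hJint : Jmat n (∫ u in (0:ℝ)..s, v u) = 0 :=
          (smul_eq_zero.mp heq).resolve_left h2
        rw [Jmat_eq_zero _ hJint, neg_zero]
      -- Step 4: traj T = (0,0), contradiction
      have htrajT : traj n v T = ((0 : V n), (0 : ℝ)) := by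
        have hT' : trajI n v T = 0 := htrajI T ⟨hT.le, le_rfl⟩
        have hEq : Set.EqOn (fun u => 2 * symp (trajI n v u) (v u)) (fun _ => (0:ℝ))
            (Set.uIcc 0 T) := by
          intro u hu
          rw [uIcc_of_le hT.le] at hu
          simp only [htrajI u hu, symp_zero_left, mul_zero]
        have hint0 : (∫ u in (0:ℝ)..T, 2 * symp (trajI n v u) (v u)) = 0 := by
          rw [intervalIntegral.integral_congr hEq, intervalIntegral.integral_zero]
        rw [traj, hT', hint0, neg_zero]
      exact hg (hopt.1.2.symm.trans htrajT)
  · exact hl0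

end
end

section
/- Let N be a norm on ℝ^{2n} with dual norm N_*, F_N(z)=½N(z)², and let v be an optimal control for the energy problem (P) with g≠e, with normal Pontryagin multiplier (1,λ) and associated function a. Then there exists a unique constant R>0 such that N(v(s))=N_*(a(s))=R for all s∈[0,T]. -/
open MeasureTheory Set

noncomputable section

lemma dot_smul_right {n} (p z : V n) (c : ℝ) : dot p (c • z) = c * dot p z := by
  unfold dot
  simp only [PiLp.smul_apply, smul_eq_mul, Finset.mul_sum]
  exact Finset.sum_congr rfl fun i _ => by ring

lemma dot_neg_right {n} (p z : V n) : dot p (-z) = -dot p z := by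
  simp [dot]

lemma dot_zero_right {n} (p : V n) : dot p 0 = 0 := by simp [dot]

lemma dot_eq_inner {n} (p z : V n) : dot p z = inner ℝ p z := by
  simp [dot, PiLp.inner_apply, RCLike.inner_apply, conj_trivial, mul_comm]

lemma isNorm_zero {n} {N : V n → ℝ} (hN : IsNorm N) : N 0 = 0 := (hN.eq_zero_iff 0).2 rfl

lemma isNorm_neg {n} {N : V n → ℝ} (hN : IsNorm N) (z : V n) : N (-z) = N z := by
  have := hN.smul (-1) z; simpa using this

lemma isNorm_pos {n} {N : V n → ℝ} (hN : IsNorm N) {z : V n} (hz : z ≠ 0) : 0 < N z :=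
  (hN.nonneg z).lt_of_ne fun h => hz ((hN.eq_zero_iff z).1 h.symm)

lemma isNorm_sum_le {n} {N : V n → ℝ} (hN : IsNorm N) {ι : Type*} (s : Finset ι) (f : ι → V n) :
    N (∑ i ∈ s, f i) ≤ ∑ i ∈ s, N (f i) := by
  classical
  induction s using Finset.cons_induction with
  | empty => simp [isNorm_zero hN]
  | cons i s hi ih =>
    rw [Finset.sum_cons, Finset.sum_cons]
    exact (hN.triangle _ _).trans (by linarith)

lemma abs_coord_le_norm {n} (z : V n) (i : Fin (2*n)) : |z i| ≤ ‖z‖ := by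
  have h : |z i| = Real.sqrt ((z i)^2) := (Real.sqrt_sq_eq_abs _).symm
  rw [h, EuclideanSpace.norm_eq]
  apply Real.sqrt_le_sqrt
  have := Finset.single_le_sum (f := fun j => ‖z j‖^2) (fun j _ => by positivity)
    (Finset.mem_univ i)
  simpa [Real.norm_eq_abs, sq_abs] using this

lemma decomp {n} (z : V n) : z = ∑ i, z i • EuclideanSpace.single i (1:ℝ) := by
  have := (EuclideanSpace.basisFun (Fin (2*n)) ℝ).sum_repr z
  simp only [EuclideanSpace.basisFun_repr, EuclideanSpace.basisFun_apply] at this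
  exact this.symm

lemma exists_upper {n} {N : V n → ℝ} (hN : IsNorm N) :
    ∃ C : ℝ, 0 < C ∧ ∀ z, N z ≤ C * ‖z‖ := by
  set C := (∑ i : Fin (2*n), N (EuclideanSpace.single i 1)) + 1 with hC
  have hs : 0 ≤ ∑ i : Fin (2*n), N (EuclideanSpace.single i 1) :=
    Finset.sum_nonneg fun i _ => hN.nonneg _
  refine ⟨C, by linarith, fun z => ?_⟩
  calc N z = N (∑ i, z i • EuclideanSpace.single i (1:ℝ)) := by rw [← decomp]
    _ ≤ ∑ i, N (z i • EuclideanSpace.single i (1:ℝ)) := isNorm_sum_le hN _ _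
    _ ≤ ∑ i : Fin (2*n), ‖z‖ * N (EuclideanSpace.single i (1:ℝ)) := by
        apply Finset.sum_le_sum
        intro i _
        rw [hN.smul]
        exact mul_le_mul_of_nonneg_right (abs_coord_le_norm z i) (hN.nonneg _)
    _ = (∑ i : Fin (2*n), N (EuclideanSpace.single i (1:ℝ))) * ‖z‖ := by
        rw [Finset.sum_mul]
        exact Finset.sum_congr rfl fun i _ => mul_comm _ _
    _ ≤ C * ‖z‖ := by
        apply mul_le_mul_of_nonneg_right _ (norm_nonneg z)
        rw [hC]; linarith

lemma isNorm_continuous {n} {N : V n → ℝ} (hN : IsNorm N) : Continuous N := by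
  obtain ⟨C, hC, hub⟩ := exists_upper hN
  have key : ∀ x y : V n, N x - N y ≤ C * ‖x - y‖ := by
    intro x y
    have h1 := hN.triangle (x - y) y
    rw [sub_add_cancel] at h1
    have h2 := hub (x - y)
    linarith
  have lip : LipschitzWith (Real.toNNReal C) N := by
    apply LipschitzWith.of_dist_le_mul
    intro x y
    rw [Real.dist_eq, dist_eq_norm, Real.coe_toNNReal _ hC.le, abs_le]
    constructor
    · have := key y x
      rw [norm_sub_rev] at this
      linarith
    · exact key x y
  exact lip.continuous

lemma exists_lower {n} {N : V n → ℝ} (hN : IsNorm N) (hn : 0 < 2*n) :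
    ∃ m : ℝ, 0 < m ∧ ∀ z, m * ‖z‖ ≤ N z := by
  haveI : Nontrivial (V n) := by
    refine ⟨EuclideanSpace.single ⟨0, hn⟩ (1:ℝ), 0, fun h => ?_⟩
    have := congrArg (fun w => w ⟨0, hn⟩) h
    simp [EuclideanSpace.single_apply] at this
  have hne : (Metric.sphere (0:V n) 1).Nonempty := NormedSpace.sphere_nonempty.2 zero_le_one
  obtain ⟨z₀, hz₀, hmin⟩ := (isCompact_sphere (0:V n) 1).exists_isMinOn hne
    (isNorm_continuous hN).continuousOn
  rw [mem_sphere_zero_iff_norm] at hz₀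
  have hz₀ne : z₀ ≠ 0 := by intro h; rw [h, norm_zero] at hz₀; norm_num at hz₀
  refine ⟨N z₀, isNorm_pos hN hz₀ne, fun z => ?_⟩
  rcases eq_or_ne z 0 with rfl | hz
  · simp [isNorm_zero hN]
  · have hzn : 0 < ‖z‖ := norm_pos_iff.2 hz
    have hw : (‖z‖⁻¹ • z) ∈ Metric.sphere (0:V n) 1 := by
      rw [mem_sphere_zero_iff_norm, norm_smul, norm_inv, norm_norm]
      exact inv_mul_cancel₀ hzn.ne'
    have h1 := isMinOn_iff.1 hmin _ hw
    rw [hN.smul, abs_of_pos (inv_pos.2 hzn)] at h1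
    calc N z₀ * ‖z‖ ≤ (‖z‖⁻¹ * N z) * ‖z‖ := mul_le_mul_of_nonneg_right h1 hzn.le
      _ = N z := by field_simp


lemma traj_eq_zero' {n : ℕ} {T : ℝ} (hT : 0 ≤ T) {v : ℝ → V n}
    (hv : ∀ s ∈ Icc (0:ℝ) T, v s = 0) : traj n v T = ((0 : V n), (0:ℝ)) := by
  have h1 : ∀ s ∈ Icc (0:ℝ) T, trajI n v s = 0 := by
    intro s hs
    unfold trajI
    rw [intervalIntegral.integral_congr (g := fun _ : ℝ => (0 : V n))
      (fun u hu => by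
        rw [uIcc_of_le hs.1] at hu
        exact hv u ⟨hu.1, hu.2.trans hs.2⟩)]
    simp
  unfold traj
  refine Prod.ext ?_ ?_
  · exact h1 T (right_mem_Icc.2 hT)
  · show -∫ u in (0:ℝ)..T, 2 * symp (trajI n v u) (v u) = 0
    rw [intervalIntegral.integral_congr (g := fun _ : ℝ => (0:ℝ))
      (fun u hu => by
        rw [uIcc_of_le hT] at hu
        rw [hv u hu, symp_zero_right]
        norm_num)]
    simp

/-- For an optimal control `v` of the energy problem with normal
multiplier `(1, λ)` and associated function `a`, there is a unique constant `R > 0`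
with `N(v(s)) = N_*(a(s)) = R` on `[0,T]`. -/
theorem stmt11 (n : ℕ) (N : V n → ℝ) (hN : IsNorm N) (T : ℝ) (hT : 0 < T)
    (g : Heis n) (hg : g ≠ ((0 : V n), (0 : ℝ))) (v : ℝ → V n)
    (hopt : OptimalEnergy n N T g v) (m : PMP n N T v 1) :
    ∃! R : ℝ, 0 < R ∧ ∀ s ∈ Icc (0:ℝ) T,
      N (v s) = R ∧ dualN N (afun n v m.lam m.k s) = R := by
  classical
  have hgT : traj n v T = g := hopt.1.2
  have h0T : (0:ℝ) ∈ Icc (0:ℝ) T := left_mem_Icc.2 hT.le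
  have hnotzero : ¬ (∀ s ∈ Icc (0:ℝ) T, v s = 0) := by
    intro h
    have h2 := traj_eq_zero' hT.le h
    rw [hgT] at h2
    exact hg h2
  have hn : 0 < 2 * n := by
    by_contra h
    push_neg at h
    apply hnotzero
    intro s _
    ext i
    exact absurd i.isLt (by omega)
  obtain ⟨mlow, hmlow, hlow⟩ := exists_lower hN hn
  have hSne : ({z : V n | N z = 1}).Nonempty := by
    have hne : (EuclideanSpace.single (⟨0, hn⟩ : Fin (2*n)) (1:ℝ)) ≠ 0 := by
      intro h
      have := congrArg (fun w => w ⟨0, hn⟩) h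
      simp [EuclideanSpace.single_apply] at this
    have hpos := isNorm_pos hN hne
    refine ⟨(N (EuclideanSpace.single ⟨0, hn⟩ (1:ℝ)))⁻¹ • EuclideanSpace.single ⟨0, hn⟩ (1:ℝ), ?_⟩
    simp only [mem_setOf_eq, hN.smul, abs_of_pos (inv_pos.2 hpos)]
    exact inv_mul_cancel₀ hpos.ne'
  have hbdd : ∀ p : V n, BddAbove ((fun z => dot p z) '' {z : V n | N z = 1}) := by
    intro p
    refine ⟨‖p‖ * (1/mlow), ?_⟩
    rintro x ⟨z, hz, rfl⟩
    have h1 : dot p z ≤ ‖p‖ * ‖z‖ := by rw [dot_eq_inner]; exact real_inner_le_norm p z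
    have h2 : mlow * ‖z‖ ≤ 1 := by
      have := hlow z
      rw [mem_setOf_eq] at hz
      rw [hz] at this
      exact this
    have h3 : ‖z‖ ≤ 1/mlow := by rw [le_div_iff₀ hmlow]; nlinarith
    calc dot p z ≤ ‖p‖ * ‖z‖ := h1
      _ ≤ ‖p‖ * (1/mlow) := mul_le_mul_of_nonneg_left h3 (norm_nonneg p)
  have hle : ∀ (p z : V n), N z = 1 → dot p z ≤ dualN N p := fun p z hz =>
    le_csSup (hbdd p) ⟨z, hz, rfl⟩
  have hdnonneg : ∀ p : V n, 0 ≤ dualN N p := by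
    intro p
    obtain ⟨z, hz⟩ := hSne
    have h1 := hle p z hz
    have h2 := hle p (-z) (by rw [isNorm_neg hN]; exact hz)
    rw [dot_neg_right] at h2
    linarith
  have hdual_ineq : ∀ (p u : V n), dot p u ≤ dualN N p * N u := by
    intro p u
    rcases eq_or_ne u 0 with rfl | hu
    · rw [dot_zero_right, isNorm_zero hN, mul_zero]
    · have hNu : 0 < N u := isNorm_pos hN hu
      have hz : N ((N u)⁻¹ • u) = 1 := by
        rw [hN.smul, abs_of_pos (inv_pos.2 hNu)]
        exact inv_mul_cancel₀ hNu.ne'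
      have h1 := hle p _ hz
      rw [dot_smul_right] at h1
      calc dot p u = N u * ((N u)⁻¹ * dot p u) := by field_simp
        _ ≤ N u * dualN N p := mul_le_mul_of_nonneg_left h1 hNu.le
        _ = dualN N p * N u := mul_comm _ _
  have happrox : ∀ (p : V n), ∀ ε : ℝ, 0 < ε → ∃ z, N z = 1 ∧ dualN N p - ε < dot p z := by
    intro p ε hε
    have hlt : dualN N p - ε < sSup ((fun z => dot p z) '' {z : V n | N z = 1}) :=
      sub_lt_self _ hε
    obtain ⟨x, ⟨z, hz, rfl⟩, hxlt⟩ := exists_lt_of_lt_csSup (hSne.image _) hlt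
    exact ⟨z, hz, hxlt⟩
  have key : ∀ s ∈ Icc (0:ℝ) T,
      N (v s) = dualN N (afun n v m.lam m.k s) ∧
      FN N (v s) - dot (afun n v m.lam m.k s) (v s)
        = -(1/2) * (dualN N (afun n v m.lam m.k s))^2 := by
    intro s hs
    have harg := m.argmin s hs
    simp only [one_mul] at harg
    set p := afun n v m.lam m.k s with hp
    set R := dualN N p with hR
    have hR0 : 0 ≤ R := hdnonneg p
    have hEub : ∀ ε : ℝ, 0 < ε →
        FN N (v s) - dot p (v s) ≤ -(1/2)*R^2 + R*ε := by
      intro ε hε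
      obtain ⟨z, hz1, hz2⟩ := happrox p ε hε
      have h := harg (R • z)
      have hFu : FN N (R • z) = (1/2) * R^2 := by
        simp only [FN, hN.smul, hz1, mul_one, sq_abs]
      have hdu : dot p (R • z) = R * dot p z := dot_smul_right p z R
      have h2 : R * (R - ε) ≤ R * dot p z := mul_le_mul_of_nonneg_left hz2.le hR0
      rw [hFu, hdu] at h
      nlinarith
    have hEub' : FN N (v s) - dot p (v s) ≤ -(1/2)*R^2 := by
      rcases eq_or_lt_of_le hR0 with hR0' | hRpos
      · have h := hEub 1 one_pos
        rw [← hR0'] at h ⊢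
        simpa using h
      · by_contra hcon
        push_neg at hcon
        have hδ : 0 < (FN N (v s) - dot p (v s) + (1/2)*R^2) / (2*R) :=
          div_pos (by linarith) (by linarith)
        have h := hEub _ hδ
        have hcl : R * ((FN N (v s) - dot p (v s) + (1/2)*R^2) / (2*R))
            = (FN N (v s) - dot p (v s) + (1/2)*R^2)/2 := by
          field_simp
        rw [hcl] at h
        linarith
    have h1 := hdual_ineq p (v s)
    have h2 := sq_nonneg (N (v s) - R)
    have hE : FN N (v s) - dot p (v s) = -(1/2)*R^2 := by
      apply le_antisymm hEub'
      simp only [FN]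
      nlinarith
    have hNv : N (v s) = R := by
      simp only [FN] at hE
      have h3 : (N (v s) - R)^2 ≤ 0 := by nlinarith
      have h4 : (N (v s) - R)^2 = 0 := le_antisymm h3 h2
      have h5 : N (v s) - R = 0 := by
        exact (pow_eq_zero_iff two_ne_zero).1 h4
      linarith
    exact ⟨hNv, hE⟩
  obtain ⟨c, hc⟩ := m.isConst
  have hconst : ∀ s ∈ Icc (0:ℝ) T,
      dualN N (afun n v m.lam m.k s) = dualN N (afun n v m.lam m.k 0) := by
    intro s hs
    have e1 := (key s hs).2
    have e2 := (key 0 h0T).2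
    have c1 := hc s hs
    have c2 := hc 0 h0T
    simp only [one_mul] at c1 c2
    have hsq : (dualN N (afun n v m.lam m.k s))^2 = (dualN N (afun n v m.lam m.k 0))^2 := by
      nlinarith
    have h1 := hdnonneg (afun n v m.lam m.k s)
    have h2 := hdnonneg (afun n v m.lam m.k 0)
    rw [← Real.sqrt_sq h1, ← Real.sqrt_sq h2, hsq]
  have hall : ∀ s ∈ Icc (0:ℝ) T,
      N (v s) = N (v 0) ∧ dualN N (afun n v m.lam m.k s) = N (v 0) := by
    intro s hs
    have h1 : dualN N (afun n v m.lam m.k s) = N (v 0) := by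
      rw [hconst s hs, ← (key 0 h0T).1]
    exact ⟨by rw [(key s hs).1, h1], h1⟩
  have hpos : 0 < N (v 0) := by
    rcases (hN.nonneg (v 0)).eq_or_lt with h0' | h
    · exfalso
      apply hnotzero
      intro s hs
      have : N (v s) = 0 := by rw [(hall s hs).1, ← h0']
      exact (hN.eq_zero_iff _).1 this
    · exact h
  refine ⟨N (v 0), ⟨hpos, hall⟩, ?_⟩
  rintro R' ⟨_, h'⟩
  exact ((h' 0 h0T).1).symm


end
end
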